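/- arXiv:0710.2758 — 12 statements merged into one kernel-verified Lean document; each statement's English description precedes it below -/
import Mathlib

section
/- A trading strategy (α,β) satisfies the self-financing condition ϑ_t(ϱ_t(α_t) − α_{t+1}, β_t − β_{t+1}) ≥ 0 if and only if for all x ∈ [S^b_t, S^a_t] and all R ∈ [R^d_t, R^c_t] one has α_t R + β_t x ≥ α_{t+1} + β_{t+1} x. -/
/-- A trading strategy satisfies the self-financing condition
`ϑ_t(ϱ_t(α_t) − α_{t+1}, β_t − β_{t+1}) ≥ 0` iff for all `x ∈ [S^b, S^a]` and
`R ∈ [R^d, R^c]` one has `α_t R + β_t x ≥ α_{t+1} + β_{t+1} x`. -/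
theorem selfFinancing_iff_wedge (Sb Sa Rd Rc αt αt1 βt βt1 : ℝ)
    (hSb : 0 < Sb) (hba : Sb ≤ Sa) (hRd : 0 < Rd) (hdc : Rd ≤ Rc) :
    0 ≤ (max αt 0 * Rd - max (-αt) 0 * Rc - αt1)
        + max (βt - βt1) 0 * Sb - max (-(βt - βt1)) 0 * Sa ↔
      ∀ x ∈ Set.Icc Sb Sa, ∀ R ∈ Set.Icc Rd Rc,
        αt1 + βt1 * x ≤ αt * R + βt * x := by
  constructor
  · intro h x hx R hR
    have h1 : max αt 0 * Rd - max (-αt) 0 * Rc ≤ αt * R := by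
      rcases le_or_gt 0 αt with h0 | h0
      · rw [max_eq_left h0, max_eq_right (by linarith)]
        nlinarith [hR.1]
      · rw [max_eq_right h0.le, max_eq_left (by linarith)]
        nlinarith [hR.2]
    have h2 : max (βt - βt1) 0 * Sb - max (-(βt - βt1)) 0 * Sa ≤ (βt - βt1) * x := by
      rcases le_or_gt 0 (βt - βt1) with h0 | h0
      · rw [max_eq_left h0, max_eq_right (by linarith)]
        nlinarith [hx.1]
      · rw [max_eq_right h0.le, max_eq_left (by linarith)]
        nlinarith [hx.2]
    nlinarith
  · intro h
    rcases le_or_gt 0 αt with ha | ha <;> rcases le_or_gt 0 (βt - βt1) with hb | hb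
    · have := h Sb ⟨le_refl _, hba⟩ Rd ⟨le_refl _, hdc⟩
      rw [max_eq_left ha, max_eq_right (by linarith), max_eq_left hb,
        max_eq_right (by linarith)]
      linarith
    · have := h Sa ⟨hba, le_refl _⟩ Rd ⟨le_refl _, hdc⟩
      rw [max_eq_left ha, max_eq_right (by linarith), max_eq_right hb.le,
        max_eq_left (by linarith)]
      linarith
    · have := h Sb ⟨le_refl _, hba⟩ Rc ⟨hdc, le_refl _⟩
      rw [max_eq_right ha.le, max_eq_left (by linarith), max_eq_left hb,
        max_eq_right (by linarith)]
      linarith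
    · have := h Sa ⟨hba, le_refl _⟩ Rc ⟨hdc, le_refl _⟩
      rw [max_eq_right ha.le, max_eq_left (by linarith), max_eq_right hb.le,
        max_eq_left (by linarith)]
      linarith
end

section
/- For any martingale triple (P,S,R) with deflator B_t = ∏_{s≤t} R_s and any self-financing trading strategy (α,β), the process t ↦ (1/B_t)(α_t R_t + β_t S_t) is a supermartingale under P. -/
open MeasureTheory Finset

/-- For a martingale triple `(P, S, R)` with deflator `B_t = ∏_{s ≤ t} R_s` and any
self-financing strategy `(α, β)`, the process `t ↦ (α_t R_t + β_t S_t) / B_t` is a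
supermartingale under `P`. -/
theorem discounted_wealth_supermartingale
    {Ω : Type*} [Fintype Ω] {m0 : MeasurableSpace Ω}
    (ℱ : Filtration ℕ m0) (P : Measure Ω) [IsProbabilityMeasure P]
    (Sb Sa S Rd Rc R α β : ℕ → Ω → ℝ)
    (hSb : ∀ t ω, 0 < Sb t ω) (hba : ∀ t ω, Sb t ω ≤ Sa t ω)
    (hRd : ∀ t ω, 0 < Rd t ω) (hdc : ∀ t ω, Rd t ω ≤ Rc t ω)
    (hSbd : ∀ t ω, Sb t ω ≤ S t ω ∧ S t ω ≤ Sa t ω)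
    (hRbd : ∀ t ω, Rd t ω ≤ R t ω ∧ R t ω ≤ Rc t ω)
    (hSadapt : Adapted ℱ S)
    (hR0 : StronglyMeasurable[ℱ 0] (R 0))
    (hRpred : ∀ t, StronglyMeasurable[ℱ t] (R (t + 1)))
    (hα0 : StronglyMeasurable[ℱ 0] (α 0))
    (hαpred : ∀ t, StronglyMeasurable[ℱ t] (α (t + 1)))
    (hβpred : ∀ t, StronglyMeasurable[ℱ t] (β (t + 1)))
    (hβ0 : β 0 = 0)
    (hsf : ∀ t ω, ∀ x ∈ Set.Icc (Sb t ω) (Sa t ω), ∀ r ∈ Set.Icc (Rd t ω) (Rc t ω),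
      α (t + 1) ω + β (t + 1) ω * x ≤ α t ω * r + β t ω * x)
    (hmart : Martingale
      (fun t ω => S t ω / ∏ s ∈ Finset.range (t + 1), R s ω) ℱ P) :
    Supermartingale
      (fun t ω => (α t ω * R t ω + β t ω * S t ω) / ∏ s ∈ Finset.range (t + 1), R s ω)
      ℱ P := by
  set B : ℕ → Ω → ℝ := fun t ω => ∏ s ∈ Finset.range (t + 1), R s ω with hBdef
  have hRpos : ∀ t ω, 0 < R t ω := fun t ω => lt_of_lt_of_le (hRd t ω) (hRbd t ω).1
  have hBpos : ∀ t ω, 0 < B t ω := fun t ω => Finset.prod_pos fun s _ => hRpos s ω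
  have hRmeas : ∀ t, StronglyMeasurable[ℱ t] (R t) := by
    intro t
    cases t with
    | zero => exact hR0
    | succ n => exact (hRpred n).mono (ℱ.mono n.le_succ)
  have hBmeas : ∀ t, StronglyMeasurable[ℱ t] (B t) := by
    intro t
    induction t with
    | zero => simpa [hBdef] using hR0
    | succ n ih =>
      have h : B (n + 1) = fun ω => B n ω * R (n + 1) ω := by
        funext ω; simp [hBdef, Finset.prod_range_succ]
      rw [h]
      exact (ih.mono (ℱ.mono n.le_succ)).mul ((hRpred n).mono (ℱ.mono n.le_succ))
  have hαmeas : ∀ t, StronglyMeasurable[ℱ t] (α t) := by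
    intro t
    cases t with
    | zero => exact hα0
    | succ n => exact (hαpred n).mono (ℱ.mono n.le_succ)
  have hβmeas : ∀ t, StronglyMeasurable[ℱ t] (β t) := by
    intro t
    cases t with
    | zero => rw [hβ0]; exact stronglyMeasurable_const
    | succ n => exact (hβpred n).mono (ℱ.mono n.le_succ)
  have hVadapt : StronglyAdapted ℱ
      (fun t ω => (α t ω * R t ω + β t ω * S t ω) / B t ω) := fun t =>
    ((((hαmeas t).measurable.mul (hRmeas t).measurable).add ((hβmeas t).measurable.mul (hSadapt t))).div (hBmeas t).measurable).stronglyMeasurable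
  have hint : ∀ t, Integrable
      (fun ω => (α t ω * R t ω + β t ω * S t ω) / B t ω) P := fun t =>
    ⟨((hVadapt t).mono (ℱ.le t)).aestronglyMeasurable, .of_finite⟩
  refine supermartingale_nat hVadapt hint fun t => ?_
  -- decompose V (t+1)
  have hdecomp : (fun ω => (α (t+1) ω * R (t+1) ω + β (t+1) ω * S (t+1) ω) / B (t+1) ω)
      = (fun ω => α (t+1) ω / B t ω)
        + (β (t+1)) * (fun ω => S (t+1) ω / B (t+1) ω) := by
    funext ω
    have hBt : B t ω ≠ 0 := (hBpos t ω).ne'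
    have hRt : R (t+1) ω ≠ 0 := (hRpos (t+1) ω).ne'
    have hBsucc : B (t+1) ω = B t ω * R (t+1) ω := by
      simp [hBdef, Finset.prod_range_succ]
    simp only [Pi.add_apply, Pi.mul_apply, hBsucc]
    field_simp
  have hfmeas : StronglyMeasurable[ℱ t] (fun ω => α (t+1) ω / B t ω) :=
    ((hαpred t).measurable.div (hBmeas t).measurable).stronglyMeasurable
  have hfint : Integrable (fun ω => α (t+1) ω / B t ω) P :=
    ⟨(hfmeas.mono (ℱ.le t)).aestronglyMeasurable, .of_finite⟩
  have hMint : Integrable (fun ω => S (t+1) ω / B (t+1) ω) P := hmart.integrable (t+1)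
  have hgMint : Integrable ((β (t+1)) * (fun ω => S (t+1) ω / B (t+1) ω)) P := by
    refine ⟨?_, .of_finite⟩
    exact (((hβpred t).mono (ℱ.le t)).measurable.mul
      (((hSadapt (t+1)).mono (ℱ.le (t+1)) le_rfl).div
        ((hBmeas (t+1)).mono (ℱ.le (t+1))).measurable)).stronglyMeasurable.aestronglyMeasurable
  have hcond : P[(fun ω => (α (t+1) ω * R (t+1) ω + β (t+1) ω * S (t+1) ω) / B (t+1) ω) | ℱ t]
      =ᵐ[P] (fun ω => α (t+1) ω / B t ω) + (β (t+1)) * (fun ω => S t ω / B t ω) := by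
    rw [hdecomp]
    refine (condExp_add hfint hgMint (ℱ t)).trans ?_
    have h1 : P[(fun ω => α (t+1) ω / B t ω) | ℱ t] = fun ω => α (t+1) ω / B t ω :=
      condExp_of_stronglyMeasurable (ℱ.le t) hfmeas hfint
    have h2 : P[(β (t+1)) * (fun ω => S (t+1) ω / B (t+1) ω) | ℱ t]
        =ᵐ[P] (β (t+1)) * (fun ω => S t ω / B t ω) := by
      refine (condExp_mul_of_stronglyMeasurable_left (hβpred t) hgMint hMint).trans ?_
      have := hmart.condExp_ae_eq (Nat.le_succ t)
      filter_upwards [this] with ω hω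
      simp only [Pi.mul_apply]
      rw [hω]
    rw [h1]
    filter_upwards [h2] with ω hω
    simp only [Pi.add_apply] at *
    rw [hω]
  refine hcond.trans_le ?_
  refine Filter.Eventually.of_forall fun ω => ?_
  simp only [Pi.add_apply, Pi.mul_apply]
  have hBt : 0 < B t ω := hBpos t ω
  have key : α (t+1) ω + β (t+1) ω * S t ω ≤ α t ω * R t ω + β t ω * S t ω :=
    hsf t ω (S t ω) ⟨(hSbd t ω).1, (hSbd t ω).2⟩ (R t ω) ⟨(hRbd t ω).1, (hRbd t ω).2⟩
  calc α (t+1) ω / B t ω + β (t+1) ω * (S t ω / B t ω)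
      = (α (t+1) ω + β (t+1) ω * S t ω) / B t ω := by field_simp
    _ ≤ (α t ω * R t ω + β t ω * S t ω) / B t ω :=
        div_le_div_of_nonneg_right key hBt.le
end

section
/- If there exists an equivalent martingale triple (P,S,R) (P equivalent to the reference measure Q, S^b ≤ S ≤ S^a, R^d ≤ R ≤ R^c, and S/B a P-martingale with B_t = ∏_{s≤t} R_s), then the model admits no arbitrage: there is no self-financing strategy (α,β) with α_0 ≤ 0, terminal liquidation value ϑ_T(α_{T+1}, β_{T+1}) ≥ 0, and Q(ϑ_T(α_{T+1}, β_{T+1}) > 0) > 0. -/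
open MeasureTheory Finset

/-- For `a ≤ c ≤ b`, the bid/ask liquidation value is dominated by the mid value. -/
lemma emt_liq_le {a b c x : ℝ} (hac : a ≤ c) (hcb : c ≤ b) :
    max x 0 * a - max (-x) 0 * b ≤ x * c := by
  rcases le_total x 0 with h | h
  · rw [max_eq_right h, max_eq_left (by linarith : (0:ℝ) ≤ -x)]
    nlinarith
  · rw [max_eq_left h, max_eq_right (by linarith : -x ≤ (0:ℝ))]
    nlinarith

/-- If there exists an equivalent martingale triple `(P, S, R)` then the model admits
no arbitrage. -/
theorem emt_implies_no_arbitrage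
    {Ω : Type*} [Fintype Ω] [Nonempty Ω] {m0 : MeasurableSpace Ω}
    [MeasurableSingletonClass Ω]
    (ℱ : Filtration ℕ m0) (T : ℕ)
    (Q P : Measure Ω) [IsProbabilityMeasure Q] [IsProbabilityMeasure P]
    (hQfull : ∀ ω, 0 < Q {ω}) (hPQ : P ≪ Q) (hQP : Q ≪ P)
    (Sb Sa S Rd Rc R : ℕ → Ω → ℝ)
    (hSb : ∀ t ω, 0 < Sb t ω) (hba : ∀ t ω, Sb t ω ≤ Sa t ω)
    (hRd : ∀ t ω, 0 < Rd t ω) (hdc : ∀ t ω, Rd t ω ≤ Rc t ω)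
    (hSadapt : Adapted ℱ S)
    (hRpred : ∀ t, StronglyMeasurable[ℱ t] (R (t + 1)))
    (hSbd : ∀ t ω, Sb t ω ≤ S t ω ∧ S t ω ≤ Sa t ω)
    (hRbd : ∀ t ω, Rd t ω ≤ R t ω ∧ R t ω ≤ Rc t ω)
    (hmart : Martingale
      (fun t ω => S t ω / ∏ s ∈ Finset.range (t + 1), R s ω) ℱ P) :
    ¬ ∃ α β : ℕ → Ω → ℝ,
      β 0 = 0 ∧ β (T + 1) = 0 ∧
      (∀ t ≤ T, StronglyMeasurable[ℱ t] (α (t + 1)) ∧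
        StronglyMeasurable[ℱ t] (β (t + 1))) ∧
      -- self-financing: ϑ_t(ϱ_t(α_t) − α_{t+1}, β_t − β_{t+1}) ≥ 0
      (∀ t ≤ T, ∀ ω,
        0 ≤ (max (α t ω) 0 * Rd t ω - max (-(α t ω)) 0 * Rc t ω - α (t + 1) ω)
          + max (β t ω - β (t + 1) ω) 0 * Sb t ω
          - max (-(β t ω - β (t + 1) ω)) 0 * Sa t ω) ∧
      -- liquidation convention: α_{T+1} = ϑ_T(ϱ_T(α_T), β_T)
      (∀ ω, α (T + 1) ω =
        (max (α T ω) 0 * Rd T ω - max (-(α T ω)) 0 * Rc T ω)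
          + max (β T ω) 0 * Sb T ω - max (-(β T ω)) 0 * Sa T ω) ∧
      (∀ ω, α 0 ω ≤ 0) ∧
      (∀ ω, 0 ≤ α (T + 1) ω + max (β (T + 1) ω) 0 * Sb T ω
        - max (-(β (T + 1) ω)) 0 * Sa T ω) ∧
      0 < Q {ω | 0 < α (T + 1) ω + max (β (T + 1) ω) 0 * Sb T ω
        - max (-(β (T + 1) ω)) 0 * Sa T ω} := by
  rintro ⟨α, β, hβ0, hβT, hmeas, hsf, hliq, hα0, hfin_nonneg, hfin_pos⟩
  -- notation
  set B : ℕ → Ω → ℝ := fun t ω => ∏ s ∈ Finset.range (t + 1), R s ω with hBdef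
  have hR : ∀ t ω, 0 < R t ω := fun t ω => lt_of_lt_of_le (hRd t ω) (hRbd t ω).1
  have hB : ∀ t ω, 0 < B t ω := fun t ω => Finset.prod_pos (fun s _ => hR s ω)
  set M : ℕ → Ω → ℝ := fun t ω => S t ω / B t ω with hMdef
  have hmartM : Martingale M ℱ P := hmart
  set W : ℕ → Ω → ℝ := fun t ω => (α (t + 1) ω + β (t + 1) ω * S t ω) / B t ω with hWdef
  have hint : ∀ f : Ω → ℝ, Integrable f P := fun f => .of_finite
  -- one-step budget inequality
  have key : ∀ t ≤ T, ∀ ω,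
      α (t + 1) ω + β (t + 1) ω * S t ω ≤ α t ω * R t ω + β t ω * S t ω := by
    intro t ht ω
    have h1 := hsf t ht ω
    have h2 : max (α t ω) 0 * Rd t ω - max (-(α t ω)) 0 * Rc t ω ≤ α t ω * R t ω :=
      emt_liq_le (hRbd t ω).1 (hRbd t ω).2
    have h3 : max (β t ω - β (t + 1) ω) 0 * Sb t ω
        - max (-(β t ω - β (t + 1) ω)) 0 * Sa t ω ≤ (β t ω - β (t + 1) ω) * S t ω :=
      emt_liq_le (hSbd t ω).1 (hSbd t ω).2
    rw [sub_mul] at h3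
    linarith
  -- rewrite W in barred form
  have hWeq : ∀ t ω, W t ω = α (t + 1) ω / B t ω + β (t + 1) ω * M t ω := by
    intro t ω
    simp only [hWdef, hMdef, add_div, mul_div_assoc]
  -- the discounted wealth has nonpositive expectation
  have main : ∀ t, t ≤ T → ∫ ω, W t ω ∂P ≤ 0 := by
    intro t
    induction t with
    | zero =>
      intro h0
      have hW0 : ∀ ω, W 0 ω ≤ 0 := by
        intro ω
        have hk := key 0 (Nat.zero_le T) ω
        have hβ0ω : β 0 ω = 0 := by rw [hβ0]; rfl
        have hB0 : B 0 ω = R 0 ω := by simp [hBdef]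
        have : W 0 ω ≤ (α 0 ω * R 0 ω + β 0 ω * S 0 ω) / B 0 ω := by
          apply div_le_div_of_nonneg_right ?_ (hB 0 ω).le |>.trans_eq rfl
          · exact hk
        rw [hβ0ω, zero_mul, add_zero, hB0] at this
        have : W 0 ω ≤ α 0 ω := by
          rwa [mul_div_assoc, div_self (ne_of_gt (hR 0 ω)), mul_one] at this
        exact this.trans (hα0 ω)
      exact integral_nonpos hW0
    | succ t ih =>
      intro hst
      have ht : t ≤ T := Nat.le_of_succ_le hst
      -- pointwise: W (t+1) ≤ W t + β (t+1) * (M (t+1) - M t)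
      have hpt : ∀ ω, W (t + 1) ω ≤ W t ω + β (t + 1) ω * (M (t + 1) ω - M t ω) := by
        intro ω
        have hk := key (t + 1) hst ω
        have hBsucc : B (t + 1) ω = B t ω * R (t + 1) ω := by
          simp [hBdef, Finset.prod_range_succ]
        have h1 : W (t + 1) ω ≤ (α (t + 1) ω * R (t + 1) ω + β (t + 1) ω * S (t + 1) ω)
            / B (t + 1) ω :=
          div_le_div_of_nonneg_right hk (hB (t + 1) ω).le |>.trans_eq rfl
        have h2 : (α (t + 1) ω * R (t + 1) ω + β (t + 1) ω * S (t + 1) ω) / B (t + 1) ω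
            = α (t + 1) ω / B t ω + β (t + 1) ω * M (t + 1) ω := by
          have hb : B t ω ≠ 0 := (hB t ω).ne'
          have hr : R (t + 1) ω ≠ 0 := (hR (t + 1) ω).ne'
          simp only [hMdef]
          rw [hBsucc]
          field_simp
        rw [h2] at h1
        rw [hWeq t ω]
        linarith
      calc ∫ ω, W (t + 1) ω ∂P
          ≤ ∫ ω, (W t ω + β (t + 1) ω * (M (t + 1) ω - M t ω)) ∂P :=
            integral_mono (hint _) (hint _) hpt
        _ = ∫ ω, W t ω ∂P + ∫ ω, β (t + 1) ω * (M (t + 1) ω - M t ω) ∂P :=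
            integral_add (hint _) (hint _)
        _ ≤ 0 := by
            have hgm : StronglyMeasurable[ℱ t] (β (t + 1)) := (hmeas t ht).2
            -- conditional expectation of the increment vanishes
            have hcondMt : P[M t | ℱ t] =ᵐ[P] M t :=
              (condExp_of_stronglyMeasurable (ℱ.le t) (hmartM.stronglyAdapted t) (hint _)).symm ▸
                Filter.EventuallyEq.rfl
            have hΔ : P[(M (t + 1) - M t) | ℱ t] =ᵐ[P] 0 := by
              have hsub := condExp_sub (μ := P) (m := ℱ t) (hint (M (t + 1))) (hint (M t))
              have hMM := hmartM.condExp_ae_eq (Nat.le_succ t)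
              filter_upwards [hsub, hMM, hcondMt] with ω h1 h2 h3
              simp only [Pi.sub_apply, Pi.zero_apply] at *
              rw [h1, h2, h3]
              ring
            have hpull : P[β (t + 1) * (M (t + 1) - M t) | ℱ t]
                =ᵐ[P] β (t + 1) * P[(M (t + 1) - M t) | ℱ t] :=
              condExp_mul_of_stronglyMeasurable_left hgm (hint _) (hint _)
            have hzero : ∫ ω, β (t + 1) ω * (M (t + 1) ω - M t ω) ∂P = 0 := by
              have h1 : ∫ ω, (β (t + 1) * (M (t + 1) - M t)) ω ∂P
                  = ∫ ω, (P[β (t + 1) * (M (t + 1) - M t) | ℱ t]) ω ∂P :=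
                (integral_condExp (ℱ.le t)).symm
              have h2 : ∫ ω, (P[β (t + 1) * (M (t + 1) - M t) | ℱ t]) ω ∂P = 0 := by
                rw [integral_congr_ae (hpull.trans ?_), integral_zero]
                filter_upwards [hΔ] with ω hω
                simp only [Pi.mul_apply, Pi.zero_apply] at *
                rw [hω, mul_zero]
              have : ∫ ω, β (t + 1) ω * (M (t + 1) ω - M t ω) ∂P
                  = ∫ ω, (β (t + 1) * (M (t + 1) - M t)) ω ∂P := by
                apply integral_congr_ae
                filter_upwards with ω
                simp
              rw [this, h1, h2]
            rw [hzero, add_zero]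
            exact ih ht
  -- terminal payoff
  simp only [hβT, Pi.zero_apply, neg_zero, max_self, zero_mul, add_zero, sub_zero]
    at hfin_nonneg hfin_pos
  have hWT_nonneg : ∀ ω, 0 ≤ W T ω := by
    intro ω
    have : W T ω = α (T + 1) ω / B T ω := by
      simp [hWdef, hβT]
    rw [this]
    exact div_nonneg (hfin_nonneg ω) (hB T ω).le
  have hsupport : {ω | 0 < α (T + 1) ω} ⊆ Function.support (W T) := by
    intro ω hω
    have : W T ω = α (T + 1) ω / B T ω := by
      simp [hWdef, hβT]
    rw [Function.mem_support, this]
    exact ne_of_gt (div_pos hω (hB T ω))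
  have hPpos : 0 < P {ω | 0 < α (T + 1) ω} := by
    rcases eq_or_lt_of_le (zero_le : 0 ≤ P {ω | 0 < α (T + 1) ω}) with h | h
    · exact absurd (hQP h.symm) (ne_of_gt hfin_pos)
    · exact h
  have hpos : 0 < ∫ ω, W T ω ∂P := by
    rw [integral_pos_iff_support_of_nonneg hWT_nonneg (hint _)]
    exact lt_of_lt_of_le hPpos (measure_mono hsupport)
  exact absurd (main T le_rfl) (not_le.mpr hpos)
end

section
/- If the model admits no arbitrage, then there exists a strictly positive F_T-measurable random vector Z_T = (Z^B_T, Z^S_T) such that E_Q[Z_T · (α_{T+1}, β_{T+1})] − α_0 ≤ 0 for every self-financing strategy (α,β). (Existence of a consistent discount factor via separation of the cone of attainable outcomes from the positive orthant.) -/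
open MeasureTheory Finset

set_option linter.unusedSectionVars false

open Finset

section Farkas

variable {E : Type*} [NormedAddCommGroup E] [NormedSpace ℝ E] [FiniteDimensional ℝ E]
variable {ι : Type*} [Fintype ι] [DecidableEq ι]

/-- Cone Carathéodory: a nonnegative combination supported on `s` can be rewritten as a
nonnegative combination supported on a subset on which the vectors are linearly independent. -/
lemma cone_caratheodory (w : ι → E) :
    ∀ n (s : Finset ι), s.card ≤ n → ∀ lam : ι → ℝ, (∀ i, 0 ≤ lam i) → (∀ i ∉ s, lam i = 0) →
    ∃ t : Finset ι, t ⊆ s ∧ LinearIndependent ℝ (fun i : t => w i) ∧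
      ∃ mu : ι → ℝ, (∀ i, 0 ≤ mu i) ∧ (∀ i ∉ t, mu i = 0) ∧
        ∑ i, mu i • w i = ∑ i, lam i • w i := by
  intro n
  induction n with
  | zero =>
    intro s hs lam hlam hsupp
    have hse : s = ∅ := Finset.card_eq_zero.mp (Nat.le_zero.mp hs)
    subst hse
    refine ⟨∅, subset_rfl, ?_, lam, hlam, hsupp, rfl⟩
    have : IsEmpty ((∅ : Finset ι) : Type _) := by simp; exact ⟨fun x => x.2⟩
    exact linearIndependent_empty_type
  | succ n ih =>
    intro s hs lam hlam hsupp
    by_cases hli : LinearIndependent ℝ (fun i : s => w i)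
    · exact ⟨s, subset_rfl, hli, lam, hlam, hsupp, rfl⟩
    · obtain ⟨g, hg0, i0, hi0⟩ := Fintype.not_linearIndependent_iff.mp hli
      -- extend g to ι
      set c : ι → ℝ := fun i => if h : i ∈ s then g ⟨i, h⟩ else 0 with hc
      have hcsum : ∑ i, c i • w i = 0 := by
        rw [← Finset.sum_subset (Finset.subset_univ s)
          (by intro i _ hi; simp [hc, hi])]
        rw [← Finset.sum_attach s (fun i => c i • w i)]
        simpa [hc] using hg0
      have hcne : ∃ i, c i ≠ 0 := ⟨i0, by simp [hc, i0.2, hi0]⟩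
      have hcs : ∀ i ∉ s, c i = 0 := fun i hi => by simp [hc, hi]
      -- make a direction with a positive coordinate
      obtain ⟨d, hdsum, hds, j0, hj0⟩ :
          ∃ d : ι → ℝ, (∑ i, d i • w i = 0) ∧ (∀ i ∉ s, d i = 0) ∧ ∃ j, 0 < d j := by
        obtain ⟨i, hi⟩ := hcne
        rcases lt_or_gt_of_ne hi with h | h
        · refine ⟨-c, by simpa using hcsum, fun i hi => by simp [hcs i hi], i, by simpa using h⟩
        · exact ⟨c, hcsum, hcs, i, h⟩
      have hj0s : j0 ∈ s := by
        by_contra h; rw [hds j0 h] at hj0; exact lt_irrefl _ hj0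
      -- minimize lam i / d i over positive coordinates
      set Tpos : Finset ι := s.filter (fun i => 0 < d i) with hT
      have hTne : Tpos.Nonempty := ⟨j0, by simp [hT, hj0s, hj0]⟩
      obtain ⟨k, hkT, hkmin⟩ := Tpos.exists_min_image (fun i => lam i / d i) hTne
      have hdk : 0 < d k := (Finset.mem_filter.mp hkT).2
      have hks : k ∈ s := (Finset.mem_filter.mp hkT).1
      set r : ℝ := lam k / d k with hr
      have hr0 : 0 ≤ r := div_nonneg (hlam k) hdk.le
      set lam' : ι → ℝ := fun i => lam i - r * d i with hlam'
      have hlam'0 : ∀ i, 0 ≤ lam' i := by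
        intro i
        by_cases hdi : 0 < d i
        · have his : i ∈ s := by
            by_contra h; rw [hds i h] at hdi; exact lt_irrefl _ hdi
          have hmin : r ≤ lam i / d i := hkmin i (by simp [hT, his, hdi])
          have : r * d i ≤ lam i := (le_div_iff₀ hdi).mp hmin
          simp only [hlam']; linarith
        · push_neg at hdi
          have : r * d i ≤ 0 := mul_nonpos_of_nonneg_of_nonpos hr0 hdi
          simp only [hlam']; linarith [hlam i]
      have hlam'k : lam' k = 0 := by
        simp only [hlam', hr]; field_simp; ring
      have hlam'supp : ∀ i ∉ s.erase k, lam' i = 0 := by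
        intro i hi
        by_cases hik : i = k
        · subst hik; exact hlam'k
        · have his : i ∉ s := fun h => hi (Finset.mem_erase.mpr ⟨hik, h⟩)
          simp only [hlam', hsupp i his, hds i his]; ring
      have hsum' : ∑ i, lam' i • w i = ∑ i, lam i • w i := by
        simp only [hlam', sub_smul, Finset.sum_sub_distrib]
        have : ∑ i, (r * d i) • w i = r • ∑ i, d i • w i := by
          rw [Finset.smul_sum]; congr 1; funext i; rw [smul_smul]
        rw [this, hdsum, smul_zero, sub_zero]
      have hcard : (s.erase k).card ≤ n := by
        have := Finset.card_erase_of_mem hks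
        omega
      obtain ⟨t, hts, hlit, mu, hmu0, hmus, hmusum⟩ := ih (s.erase k) hcard lam' hlam'0 hlam'supp
      exact ⟨t, hts.trans (Finset.erase_subset _ _), hlit, mu, hmu0, hmus, by rw [hmusum, hsum']⟩


/-- A finitely generated cone in a finite-dimensional normed real vector space is closed. -/
lemma cone_isClosed (w : ι → E) :
    IsClosed {x : E | ∃ lam : ι → ℝ, (∀ i, 0 ≤ lam i) ∧ x = ∑ i, lam i • w i} := by
  classical
  have hset : {x : E | ∃ lam : ι → ℝ, (∀ i, 0 ≤ lam i) ∧ x = ∑ i, lam i • w i} =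
      ⋃ t : {t : Finset ι // LinearIndependent ℝ (fun i : {x // x ∈ t} => w i.1)},
        (Fintype.linearCombination ℝ (fun i : {x // x ∈ t.1} => w i.1)) ''
          {l : {x // x ∈ t.1} → ℝ | ∀ i, 0 ≤ l i} := by
    ext x
    simp only [Set.mem_setOf_eq, Set.mem_iUnion, Set.mem_image]
    constructor
    · rintro ⟨lam, hlam, rfl⟩
      obtain ⟨t, -, hli, mu, hmu0, hmus, hmusum⟩ :=
        cone_caratheodory w (Finset.univ.card) Finset.univ le_rfl lam hlam (by simp)
      refine ⟨⟨t, hli⟩, fun i => mu i.1, fun i => hmu0 i.1, ?_⟩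
      rw [Fintype.linearCombination_apply]
      have key : (∑ i : {x // x ∈ t}, mu i.1 • w i.1) = ∑ i : ι, mu i • w i := by
        rw [Finset.sum_coe_sort t (fun i => mu i • w i)]
        exact Finset.sum_subset (Finset.subset_univ t)
          (by intro i _ hi; simp [hmus i hi])
      exact key.trans hmusum
    · rintro ⟨t, l, hl, rfl⟩
      refine ⟨fun i => if h : i ∈ t.1 then l ⟨i, h⟩ else 0,
        fun i => by dsimp only; split_ifs with h; exacts [hl ⟨i, h⟩, le_rfl], ?_⟩
      rw [Fintype.linearCombination_apply]
      have key : (∑ i : ι, (if h : i ∈ t.1 then l ⟨i, h⟩ else 0) • w i)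
          = ∑ i ∈ t.1, (if h : i ∈ t.1 then l ⟨i, h⟩ else 0) • w i :=
        (Finset.sum_subset (Finset.subset_univ t.1)
          (by intro i _ hi; simp [hi])).symm
      rw [key, ← Finset.sum_coe_sort t.1
        (fun i => (if h : i ∈ t.1 then l ⟨i, h⟩ else 0) • w i)]
      congr 1; funext i; simp [i.2]
  rw [hset]
  refine isClosed_iUnion_of_finite ?_
  rintro ⟨t, hli⟩
  have hinj : LinearMap.ker (Fintype.linearCombination ℝ (fun i : {x // x ∈ t} => w i.1)) = ⊥ := by
    rw [LinearMap.ker_eq_bot']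
    intro l hl
    rw [Fintype.linearCombination_apply] at hl
    exact funext (Fintype.linearIndependent_iff.mp hli l hl)
  have hemb := LinearMap.isClosedEmbedding_of_injective hinj
  refine hemb.isClosedMap _ ?_
  have : {l : {x // x ∈ t} → ℝ | ∀ i, 0 ≤ l i} = ⋂ i, {l | 0 ≤ l i} := by
    ext l; simp [Set.mem_iInter]
  rw [this]
  exact isClosed_iInter fun i => isClosed_le continuous_const (continuous_apply i)

/-- Farkas' lemma over a finite-dimensional real vector space. -/
lemma farkas_lemma (g : ι → E →ₗ[ℝ] ℝ) (h : E →ₗ[ℝ] ℝ)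
    (H : ∀ v, (∀ i, g i v ≤ 0) → h v ≤ 0) :
    ∃ lam : ι → ℝ, (∀ i, 0 ≤ lam i) ∧ h = ∑ i, lam i • g i := by
  classical
  set e : (E →ₗ[ℝ] ℝ) ≃ₗ[ℝ] (E →L[ℝ] ℝ) := LinearMap.toContinuousLinearMap with he
  set C : Set (E →L[ℝ] ℝ) :=
    {x | ∃ lam : ι → ℝ, (∀ i, 0 ≤ lam i) ∧ x = ∑ i, lam i • e (g i)} with hC
  by_cases hin : e h ∈ C
  · obtain ⟨lam, hlam, hsum⟩ := hin
    refine ⟨lam, hlam, ?_⟩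
    apply e.injective
    rw [hsum, map_sum]
    simp only [_root_.map_smul]
  · have hconv : Convex ℝ C := by
      rintro x ⟨lx, hlx, rfl⟩ y ⟨ly, hly, rfl⟩ a b ha hb hab
      refine ⟨fun i => a * lx i + b * ly i,
        fun i => add_nonneg (mul_nonneg ha (hlx i)) (mul_nonneg hb (hly i)), ?_⟩
      simp only [add_smul, Finset.sum_add_distrib, Finset.smul_sum, smul_smul]
    obtain ⟨f, u, hfu, hu⟩ := geometric_hahn_banach_closed_point (x := e h) hconv
      (cone_isClosed (fun i => e (g i))) hin
    have h0C : (0 : E →L[ℝ] ℝ) ∈ C := ⟨0, by simp, by simp⟩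
    have hu0 : 0 < u := by have := hfu 0 h0C; simpa using this
    have hfneg : ∀ x ∈ C, f x ≤ 0 := by
      rintro x hx
      by_contra hpos
      push_neg at hpos
      obtain ⟨lx, hlx, rfl⟩ := hx
      have hmem : ((u + 1) / f (∑ i, lx i • e (g i))) • (∑ i, lx i • e (g i)) ∈ C := by
        refine ⟨fun i => ((u + 1) / f (∑ i, lx i • e (g i))) * lx i,
          fun i => mul_nonneg (div_nonneg (by linarith) hpos.le) (hlx i), ?_⟩
        rw [Finset.smul_sum]; congr 1; funext i; rw [smul_smul]
      have hlt := hfu _ hmem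
      rw [_root_.map_smul, smul_eq_mul, div_mul_cancel₀ _ (ne_of_gt hpos)] at hlt
      linarith
    -- realize f as evaluation at a point
    set F : Module.Dual ℝ E →ₗ[ℝ] ℝ := f.toLinearMap.comp e.toLinearMap with hF
    set v : E := (Module.evalEquiv ℝ E).symm F with hv
    have hFv : ∀ φ : Module.Dual ℝ E, φ v = F φ := by
      intro φ
      rw [hv, Module.apply_evalEquiv_symm_apply]
    have hgv : ∀ i, g i v ≤ 0 := by
      intro i
      have hmemi : e (g i) ∈ C := ⟨fun j => if j = i then 1 else 0,
        by intro j; dsimp only; split <;> norm_num,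
        by simp [ite_smul]⟩
      have := hfneg (e (g i)) hmemi
      have heval : (g i) v = f (e (g i)) := hFv (g i)
      linarith [heval ▸ this]
    have hhv : h v ≤ 0 := H v hgv
    have hpos : 0 < h v := by
      have heval : h v = f (e h) := hFv h
      rw [heval]; linarith
    linarith

end Farkas

set_option maxHeartbeats 1000000
open MeasureTheory Finset


namespace NAProof

variable {Ω : Type*} [Fintype Ω] {T : ℕ}

/-- The space of strategy data: `(α₀, (α_{t+1})_{t≤T}, (β_{t+1})_{t≤T})`. -/
abbrev V (Ω : Type*) (T : ℕ) := ℝ × (Fin (T+1) → Ω → ℝ) × (Fin (T+1) → Ω → ℝ)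

/-- The bond-holdings process determined by `v`. -/
def αf (v : V Ω T) : ℕ → Ω → ℝ
  | 0 => fun _ => v.1
  | (t+1) => if h : t < T+1 then v.2.1 ⟨t, h⟩ else 0

/-- The stock-holdings process determined by `v`. -/
def βf (v : V Ω T) : ℕ → Ω → ℝ
  | 0 => 0
  | (t+1) => if h : t < T+1 then v.2.2 ⟨t, h⟩ else 0

lemma αf_add (u v : V Ω T) (p : ℕ) (ω : Ω) :
    αf (u + v) p ω = αf u p ω + αf v p ω := by
  cases p with
  | zero => rfl
  | succ t => by_cases h : t < T+1 <;> simp [αf, h]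

lemma βf_add (u v : V Ω T) (p : ℕ) (ω : Ω) :
    βf (u + v) p ω = βf u p ω + βf v p ω := by
  cases p with
  | zero => simp [βf]
  | succ t => by_cases h : t < T+1 <;> simp [βf, h]

lemma αf_smul (c : ℝ) (v : V Ω T) (p : ℕ) (ω : Ω) :
    αf (c • v) p ω = c * αf v p ω := by
  cases p with
  | zero => rfl
  | succ t => by_cases h : t < T+1 <;> simp [αf, h]

lemma βf_smul (c : ℝ) (v : V Ω T) (p : ℕ) (ω : Ω) :
    βf (c • v) p ω = c * βf v p ω := by
  cases p with
  | zero => simp [βf]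
  | succ t => by_cases h : t < T+1 <;> simp [βf, h]

lemma αf_succ (v : V Ω T) (t : ℕ) (h : t < T+1) : αf v (t+1) = v.2.1 ⟨t, h⟩ := by
  simp [αf, h]

lemma βf_succ (v : V Ω T) (t : ℕ) (h : t < T+1) : βf v (t+1) = v.2.2 ⟨t, h⟩ := by
  simp [βf, h]

/-- A self-financing constraint functional. -/
def gval (Rv Sv : ℝ) (p : ℕ) (ω : Ω) : V Ω T →ₗ[ℝ] ℝ where
  toFun v := αf v (p+1) ω - Rv * αf v p ω - Sv * (βf v p ω - βf v (p+1) ω)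
  map_add' u v := by simp only [αf_add, βf_add]; ring
  map_smul' c v := by simp only [αf_smul, βf_smul, RingHom.id_apply, smul_eq_mul]; ring

@[simp] lemma gval_apply (Rv Sv : ℝ) (p : ℕ) (ω : Ω) (v : V Ω T) :
    gval Rv Sv p ω v = αf v (p+1) ω - Rv * αf v p ω - Sv * (βf v p ω - βf v (p+1) ω) := rfl

/-- Evaluation of the initial cash position. -/
def evA0 : V Ω T →ₗ[ℝ] ℝ where
  toFun v := v.1
  map_add' _ _ := rfl
  map_smul' _ _ := rfl

/-- Evaluation of a terminal bond position. -/
def evA (t : Fin (T+1)) (ω : Ω) : V Ω T →ₗ[ℝ] ℝ where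
  toFun v := v.2.1 t ω
  map_add' _ _ := rfl
  map_smul' _ _ := rfl

/-- Evaluation of a terminal stock position. -/
def evB (t : Fin (T+1)) (ω : Ω) : V Ω T →ₗ[ℝ] ℝ where
  toFun v := v.2.2 t ω
  map_add' _ _ := rfl
  map_smul' _ _ := rfl

@[simp] lemma evA0_apply (v : V Ω T) : (evA0 : V Ω T →ₗ[ℝ] ℝ) v = v.1 := rfl
@[simp] lemma evA_apply (t : Fin (T+1)) (ω : Ω) (v : V Ω T) : evA t ω v = v.2.1 t ω := rfl
@[simp] lemma evB_apply (t : Fin (T+1)) (ω : Ω) (v : V Ω T) : evB t ω v = v.2.2 t ω := rfl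

lemma hmin {p q u : ℝ} (hpq : p ≤ q) :
    max u 0 * p - max (-u) 0 * q = min (p * u) (q * u) := by
  rcases le_total 0 u with h | h
  · rw [max_eq_left h, max_eq_right (by linarith), min_eq_left (by nlinarith)]; ring
  · rw [max_eq_right h, max_eq_left (by linarith), min_eq_right (by nlinarith)]; ring

/-- The self-financing condition in max-form is equivalent to four linear inequalities. -/
lemma sf_iff {rd rc sb sa x z d : ℝ} (hrd : 0 < rd) (hrc : rd ≤ rc) (hsb : 0 < sb)
    (hsa : sb ≤ sa) :
    (0 ≤ (max x 0 * rd - max (-x) 0 * rc - z) + max d 0 * sb - max (-d) 0 * sa)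
    ↔ ∀ b1 b2 : Bool, z - (bif b1 then rd else rc) * x - (bif b2 then sb else sa) * d ≤ 0 := by
  have h1 := hmin (u := x) hrc
  have h2 := hmin (u := d) hsa
  constructor
  · intro h b1 b2
    have hx : min (rd * x) (rc * x) ≤ (bif b1 then rd else rc) * x := by
      cases b1 <;> simp [min_le_left, min_le_right]
    have hd : min (sb * d) (sa * d) ≤ (bif b2 then sb else sa) * d := by
      cases b2 <;> simp [min_le_left, min_le_right]
    nlinarith [hx, hd]
  · intro h
    have hx := min_cases (rd * x) (rc * x)
    have hd := min_cases (sb * d) (sa * d)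
    have key : z ≤ min (rd * x) (rc * x) + min (sb * d) (sa * d) := by
      rcases hx with ⟨hx1, -⟩ | ⟨hx1, -⟩ <;> rcases hd with ⟨hd1, -⟩ | ⟨hd1, -⟩
      · have := h true true
        simp only [Bool.cond_true, Bool.cond_false] at this; rw [hx1, hd1]; linarith
      · have := h true false
        simp only [Bool.cond_true, Bool.cond_false] at this; rw [hx1, hd1]; linarith
      · have := h false true
        simp only [Bool.cond_true, Bool.cond_false] at this; rw [hx1, hd1]; linarith
      · have := h false false
        simp only [Bool.cond_true, Bool.cond_false] at this; rw [hx1, hd1]; linarith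
    nlinarith [key]


/-- Extraction of a dual certificate from a "no feasible improvement" statement,
via Farkas' lemma. -/
lemma certificate [Nonempty Ω] (U : Submodule ℝ (V Ω T))
    (glike : Fin (T+1) × Ω × Bool × Bool → V Ω T →ₗ[ℝ] ℝ)
    (gextra : V Ω T →ₗ[ℝ] ℝ) (h : V Ω T →ₗ[ℝ] ℝ)
    (H : ∀ v ∈ U, (∀ q, glike q v ≤ 0) → gextra v ≤ 0 →
      (∀ ω, 0 ≤ v.2.1 (Fin.last T) ω) → (∀ ω, 0 ≤ v.2.2 (Fin.last T) ω) → h v ≤ 0) :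
    ∃ (c d : Ω → ℝ) (μ : ℝ), (∀ ω, 0 ≤ c ω) ∧ (∀ ω, 0 ≤ d ω) ∧ 0 ≤ μ ∧
      ∀ v ∈ U, (∀ q, glike q v ≤ 0) →
        h v + ∑ ω, c ω * v.2.1 (Fin.last T) ω + ∑ ω, d ω * v.2.2 (Fin.last T) ω
          ≤ μ * gextra v := by
  classical
  set 𝒢 : (Fin (T+1) × Ω × Bool × Bool) ⊕ (Unit ⊕ Ω ⊕ Ω) → (V Ω T →ₗ[ℝ] ℝ) :=
    Sum.elim glike (Sum.elim (fun _ : Unit => gextra)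
      (Sum.elim (fun ω => -(evA (Fin.last T) ω)) (fun ω => -(evB (Fin.last T) ω)))) with h𝒢
  have Hyp : ∀ x : ↥U, (∀ i, ((𝒢 i).comp U.subtype) x ≤ 0) → (h.comp U.subtype) x ≤ 0 := by
    rintro ⟨v, hv⟩ hall
    refine H v hv (fun q => hall (Sum.inl q)) (hall (Sum.inr (Sum.inl ()))) ?_ ?_
    · intro ω
      have := hall (Sum.inr (Sum.inr (Sum.inl ω)))
      simp only [LinearMap.comp_apply, Submodule.coe_subtype, h𝒢, Sum.elim_inl,
        Sum.elim_inr, LinearMap.neg_apply, evA_apply] at this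
      linarith
    · intro ω
      have := hall (Sum.inr (Sum.inr (Sum.inr ω)))
      simp only [LinearMap.comp_apply, Submodule.coe_subtype, h𝒢, Sum.elim_inl,
        Sum.elim_inr, LinearMap.neg_apply, evB_apply] at this
      linarith
  obtain ⟨lam, hlam0, hlam⟩ := farkas_lemma (E := U)
    (fun i => (𝒢 i).comp U.subtype) (h.comp U.subtype) Hyp
  refine ⟨fun ω => lam (Sum.inr (Sum.inr (Sum.inl ω))),
    fun ω => lam (Sum.inr (Sum.inr (Sum.inr ω))),
    lam (Sum.inr (Sum.inl default)),
    fun ω => hlam0 _, fun ω => hlam0 _, hlam0 _, ?_⟩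
  intro v hv hg
  have hev := DFunLike.congr_fun hlam (⟨v, hv⟩ : U)
  simp only [LinearMap.coe_sum, Finset.sum_apply, LinearMap.add_apply, LinearMap.smul_apply,
    LinearMap.comp_apply, Submodule.coe_subtype, smul_eq_mul,
    Fintype.sum_sum_type, Fintype.sum_unique, h𝒢, Sum.elim_inl, Sum.elim_inr,
    LinearMap.neg_apply,
    evA_apply, evB_apply, mul_neg, Finset.sum_neg_distrib] at hev
  have hgsum : ∑ q, lam (Sum.inl q) * (glike q) v ≤ 0 := by
    apply Finset.sum_nonpos
    intro q _
    exact mul_nonpos_of_nonneg_of_nonpos (hlam0 _) (hg q)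
  dsimp only
  linarith [hev, hgsum]

end NAProof

open NAProof


/-- If the model admits no arbitrage, then there exists a strictly positive
`F_T`-measurable consistent discount factor `Z_T = (Z^B_T, Z^S_T)` with
`E_Q[Z_T · (α_{T+1}, β_{T+1})] − α_0 ≤ 0` for every self-financing strategy. -/
theorem no_arbitrage_implies_discount_factor
    {Ω : Type*} [Fintype Ω] [Nonempty Ω] {m0 : MeasurableSpace Ω}
    [MeasurableSingletonClass Ω]
    (ℱ : Filtration ℕ m0) (T : ℕ) (hℱ0 : (ℱ 0 : MeasurableSpace Ω) = ⊥)
    (Q : Measure Ω) [IsProbabilityMeasure Q] (hQfull : ∀ ω, 0 < Q {ω})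
    (Sb Sa Rd Rc : ℕ → Ω → ℝ)
    (hSb : ∀ t ω, 0 < Sb t ω) (hba : ∀ t ω, Sb t ω ≤ Sa t ω)
    (hRd : ∀ t ω, 0 < Rd t ω) (hdc : ∀ t ω, Rd t ω ≤ Rc t ω)
    -- no arbitrage
    (hNA : ¬ ∃ α β : ℕ → Ω → ℝ,
      β 0 = 0 ∧ StronglyMeasurable[ℱ 0] (α 0) ∧
      (∀ t ≤ T, StronglyMeasurable[ℱ t] (α (t + 1)) ∧
        StronglyMeasurable[ℱ t] (β (t + 1))) ∧
      (∀ t ≤ T, ∀ ω,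
        0 ≤ (max (α t ω) 0 * Rd t ω - max (-(α t ω)) 0 * Rc t ω - α (t + 1) ω)
          + max (β t ω - β (t + 1) ω) 0 * Sb t ω
          - max (-(β t ω - β (t + 1) ω)) 0 * Sa t ω) ∧
      (∀ ω, α 0 ω ≤ 0) ∧
      (∀ ω, 0 ≤ α (T + 1) ω + max (β (T + 1) ω) 0 * Sb T ω
        - max (-(β (T + 1) ω)) 0 * Sa T ω) ∧
      0 < Q {ω | 0 < α (T + 1) ω + max (β (T + 1) ω) 0 * Sb T ω
        - max (-(β (T + 1) ω)) 0 * Sa T ω}) :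
    ∃ ZB ZS : Ω → ℝ, (∀ ω, 0 < ZB ω ∧ 0 < ZS ω) ∧
      ∀ α β : ℕ → Ω → ℝ,
        β 0 = 0 → StronglyMeasurable[ℱ 0] (α 0) →
        (∀ t ≤ T, StronglyMeasurable[ℱ t] (α (t + 1)) ∧
          StronglyMeasurable[ℱ t] (β (t + 1))) →
        (∀ t ≤ T, ∀ ω,
          0 ≤ (max (α t ω) 0 * Rd t ω - max (-(α t ω)) 0 * Rc t ω - α (t + 1) ω)
            + max (β t ω - β (t + 1) ω) 0 * Sb t ω
            - max (-(β t ω - β (t + 1) ω)) 0 * Sa t ω) →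
        ∀ ω₀, (∫ ω, (ZB ω * α (T + 1) ω + ZS ω * β (T + 1) ω) ∂Q) ≤ α 0 ω₀ := by
  classical
  obtain ⟨ω₁⟩ := (inferInstance : Nonempty Ω)
  -- `hNA` as a function
  have hNA' : ∀ α β : ℕ → Ω → ℝ,
      β 0 = 0 → StronglyMeasurable[ℱ 0] (α 0) →
      (∀ t ≤ T, StronglyMeasurable[ℱ t] (α (t + 1)) ∧
        StronglyMeasurable[ℱ t] (β (t + 1))) →
      (∀ t ≤ T, ∀ ω,
        0 ≤ (max (α t ω) 0 * Rd t ω - max (-(α t ω)) 0 * Rc t ω - α (t + 1) ω)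
          + max (β t ω - β (t + 1) ω) 0 * Sb t ω
          - max (-(β t ω - β (t + 1) ω)) 0 * Sa t ω) →
      (∀ ω, α 0 ω ≤ 0) →
      (∀ ω, 0 ≤ α (T + 1) ω + max (β (T + 1) ω) 0 * Sb T ω
        - max (-(β (T + 1) ω)) 0 * Sa T ω) →
      0 < Q {ω | 0 < α (T + 1) ω + max (β (T + 1) ω) 0 * Sb T ω
        - max (-(β (T + 1) ω)) 0 * Sa T ω} → False :=
    fun α β h1 h2 h3 h4 h5 h6 h7 => hNA ⟨α, β, h1, h2, h3, h4, h5, h6, h7⟩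
  -- the submodule of adapted strategy data
  set U : Submodule ℝ (V Ω T) :=
    { carrier := {v | ∀ t : Fin (T+1), StronglyMeasurable[ℱ t] (v.2.1 t) ∧
        StronglyMeasurable[ℱ t] (v.2.2 t)}
      add_mem' := fun hu hv t => ⟨(hu t).1.add (hv t).1, (hu t).2.add (hv t).2⟩
      zero_mem' := fun t => ⟨stronglyMeasurable_const, stronglyMeasurable_const⟩
      smul_mem' := fun c v hv t => ⟨(hv t).1.const_smul c, (hv t).2.const_smul c⟩ } with hU
  have hUmem : ∀ v : V Ω T, v ∈ U ↔ ∀ t : Fin (T+1),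
      StronglyMeasurable[ℱ t] (v.2.1 t) ∧ StronglyMeasurable[ℱ t] (v.2.2 t) := fun v => Iff.rfl
  -- the self-financing constraint functionals
  set glike : Fin (T+1) × Ω × Bool × Bool → (V Ω T →ₗ[ℝ] ℝ) := fun q =>
    gval (bif q.2.2.1 then Rd q.1 q.2.1 else Rc q.1 q.2.1)
      (bif q.2.2.2 then Sb q.1 q.2.1 else Sa q.1 q.2.1) q.1 q.2.1 with hglike
  -- feasibility implies the self-financing condition in max-form, and conversely
  have hglike_apply : ∀ (t : ℕ) (ht : t < T + 1) (ω : Ω) (b1 b2 : Bool) (v : V Ω T),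
      glike (⟨t, ht⟩, ω, b1, b2) v = αf v (t+1) ω
        - (bif b1 then Rd t ω else Rc t ω) * αf v t ω
        - (bif b2 then Sb t ω else Sa t ω) * (βf v t ω - βf v (t+1) ω) := by
    intro t ht ω b1 b2 v
    rw [hglike]
    rfl
  have hsf_of : ∀ v : V Ω T, (∀ q, glike q v ≤ 0) → ∀ t ≤ T, ∀ ω,
      0 ≤ (max (αf v t ω) 0 * Rd t ω - max (-(αf v t ω)) 0 * Rc t ω - αf v (t+1) ω)
        + max (βf v t ω - βf v (t+1) ω) 0 * Sb t ω
        - max (-(βf v t ω - βf v (t+1) ω)) 0 * Sa t ω := by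
    intro v hg t ht ω
    refine (sf_iff (hRd t ω) (hdc t ω) (hSb t ω) (hba t ω)).mpr ?_
    intro b1 b2
    have := hg (⟨t, by omega⟩, ω, b1, b2)
    rw [hglike_apply t (by omega) ω b1 b2 v] at this
    exact this
  -- the three key claims derived from no-arbitrage
  have hterm_aux : ∀ v : V Ω T, (∀ ω, 0 ≤ v.2.2 (Fin.last T) ω) → ∀ ω,
      αf v (T+1) ω + max (βf v (T+1) ω) 0 * Sb T ω - max (-(βf v (T+1) ω)) 0 * Sa T ω
        = v.2.1 (Fin.last T) ω + v.2.2 (Fin.last T) ω * Sb T ω := by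
    intro v hB ω
    have hA1 : αf v (T+1) ω = v.2.1 (Fin.last T) ω := by
      rw [αf_succ v T (by omega)]; rfl
    have hB1 : βf v (T+1) ω = v.2.2 (Fin.last T) ω := by
      rw [βf_succ v T (by omega)]; rfl
    rw [hA1, hB1, max_eq_left (hB ω), max_eq_right (by linarith [hB ω]), zero_mul, sub_zero]
  have claims12 : ∀ v, v ∈ U → (∀ q, glike q v ≤ 0) → (evA0 : V Ω T →ₗ[ℝ] ℝ) v ≤ 0 →
      (∀ ω, 0 ≤ v.2.1 (Fin.last T) ω) → (∀ ω, 0 ≤ v.2.2 (Fin.last T) ω) →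
      ∀ ω₀ : Ω, ¬ (0 < v.2.1 (Fin.last T) ω₀ + v.2.2 (Fin.last T) ω₀ * Sb T ω₀) := by
    intro v hv hg ha hA hB ω₀ hpos
    refine hNA' (αf v) (βf v) rfl stronglyMeasurable_const ?_ (hsf_of v hg) ?_ ?_ ?_
    · intro t ht
      rw [αf_succ v t (by omega), βf_succ v t (by omega)]
      exact (hv ⟨t, by omega⟩ : _)
    · intro ω; exact ha
    · intro ω
      rw [show αf v (T + 1) ω + max (βf v (T + 1) ω) 0 * Sb T ω
          - max (-(βf v (T + 1) ω)) 0 * Sa T ω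
          = v.2.1 (Fin.last T) ω + v.2.2 (Fin.last T) ω * Sb T ω from hterm_aux v hB ω]
      exact add_nonneg (hA ω) (mul_nonneg (hB ω) (hSb T ω).le)
    · refine lt_of_lt_of_le (hQfull ω₀) (measure_mono ?_)
      intro ω hω
      rw [Set.mem_singleton_iff] at hω
      subst hω
      rw [Set.mem_setOf_eq, hterm_aux v hB ω]
      exact hpos
  have claim1 : ∀ ω₀ : Ω, ∀ v, v ∈ U → (∀ q, glike q v ≤ 0) →
      (evA0 : V Ω T →ₗ[ℝ] ℝ) v ≤ 0 →
      (∀ ω, 0 ≤ v.2.1 (Fin.last T) ω) → (∀ ω, 0 ≤ v.2.2 (Fin.last T) ω) →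
      evA (Fin.last T) ω₀ v ≤ 0 := by
    intro ω₀ v hv hg ha hA hB
    by_contra hpos
    push_neg at hpos
    rw [evA_apply] at hpos
    exact claims12 v hv hg ha hA hB ω₀
      (by nlinarith [mul_nonneg (hB ω₀) (hSb T ω₀).le])
  have claim2 : ∀ ω₀ : Ω, ∀ v, v ∈ U → (∀ q, glike q v ≤ 0) →
      (evA0 : V Ω T →ₗ[ℝ] ℝ) v ≤ 0 →
      (∀ ω, 0 ≤ v.2.1 (Fin.last T) ω) → (∀ ω, 0 ≤ v.2.2 (Fin.last T) ω) →
      evB (Fin.last T) ω₀ v ≤ 0 := by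
    intro ω₀ v hv hg ha hA hB
    by_contra hpos
    push_neg at hpos
    rw [evB_apply] at hpos
    exact claims12 v hv hg ha hA hB ω₀
      (by nlinarith [hA ω₀, hSb T ω₀])
  have claim3 : ∀ v, v ∈ U → (∀ q, glike q v ≤ 0) → ((0 : V Ω T →ₗ[ℝ] ℝ)) v ≤ 0 →
      (∀ ω, 0 ≤ v.2.1 (Fin.last T) ω) → (∀ ω, 0 ≤ v.2.2 (Fin.last T) ω) →
      (-(evA0 : V Ω T →ₗ[ℝ] ℝ)) v ≤ 0 := by
    intro v hv hg _ hA hB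
    rw [LinearMap.neg_apply, evA0_apply, neg_nonpos]
    by_contra hneg
    push_neg at hneg
    -- cash injection argument
    set m : ℝ := (Finset.univ : Finset (Fin (T+1) × Ω)).inf'
      (by simp [Finset.univ_nonempty]) (fun pr => Rd pr.1 pr.2) with hm
    have hm0 : 0 < m := by
      rw [hm, Finset.lt_inf'_iff]
      intro b _
      exact hRd _ _
    have hmle : ∀ t : ℕ, t ≤ T → ∀ ω, m ≤ Rd t ω := by
      intro t ht ω
      exact Finset.inf'_le _ (Finset.mem_univ ((⟨t, by omega⟩ : Fin (T+1)), ω))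
    set ε : ℝ := -v.1 with hε
    have hε0 : 0 < ε := by rw [hε]; linarith
    set α' : ℕ → Ω → ℝ := fun p ω => αf v p ω + ε * m ^ p with hα'
    refine hNA' α' (βf v) rfl (stronglyMeasurable_const' fun _ _ => rfl) ?_ ?_ ?_ ?_ ?_
    · intro t ht
      constructor
      · have : α' (t+1) = fun ω => v.2.1 ⟨t, by omega⟩ ω + ε * m ^ (t+1) := by
          funext ω
          simp only [hα']
          rw [αf_succ v t (by omega)]
        rw [this]
        exact ((hv ⟨t, by omega⟩ : _).1).add stronglyMeasurable_const
      · rw [βf_succ v t (by omega)]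
        exact (hv ⟨t, by omega⟩ : _).2
    · intro t ht ω
      refine (sf_iff (hRd t ω) (hdc t ω) (hSb t ω) (hba t ω)).mpr ?_
      intro b1 b2
      have hgq := hg (⟨t, by omega⟩, ω, b1, b2)
      rw [hglike_apply t (by omega) ω b1 b2 v] at hgq
      have hRge : m ≤ (bif b1 then Rd t ω else Rc t ω) := by
        cases b1
        · exact le_trans (hmle t ht ω) (hdc t ω)
        · exact hmle t ht ω
      have hpow : 0 < ε * m ^ t := by positivity
      have : α' (t+1) ω - (bif b1 then Rd t ω else Rc t ω) * α' t ω
          - (bif b2 then Sb t ω else Sa t ω) * (βf v t ω - βf v (t+1) ω)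
          = (αf v (t+1) ω - (bif b1 then Rd t ω else Rc t ω) * αf v t ω
            - (bif b2 then Sb t ω else Sa t ω) * (βf v t ω - βf v (t+1) ω))
            + ε * m ^ t * (m - (bif b1 then Rd t ω else Rc t ω)) := by
        simp only [hα']
        ring
      rw [this]
      nlinarith [mul_nonneg hpow.le (sub_nonneg.mpr hRge)]
    · intro ω
      simp only [hα']
      simp only [pow_zero, mul_one]
      have : αf v 0 ω = v.1 := rfl
      rw [this, hε]
      linarith
    · intro ω
      rw [show α' (T + 1) ω + max (βf v (T + 1) ω) 0 * Sb T ω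
          - max (-(βf v (T + 1) ω)) 0 * Sa T ω
          = (v.2.1 (Fin.last T) ω + v.2.2 (Fin.last T) ω * Sb T ω) + ε * m ^ (T+1) by
        simp only [hα']
        have := hterm_aux v hB ω
        linarith [this]]
      have := mul_nonneg (hB ω) (hSb T ω).le
      have hp : 0 < ε * m ^ (T+1) := by positivity
      linarith [hA ω]
    · refine lt_of_lt_of_le (hQfull ω₁) (measure_mono ?_)
      intro ω hω
      rw [Set.mem_singleton_iff] at hω
      subst hω
      rw [Set.mem_setOf_eq]
      rw [show α' (T + 1) ω + max (βf v (T + 1) ω) 0 * Sb T ω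
          - max (-(βf v (T + 1) ω)) 0 * Sa T ω
          = (v.2.1 (Fin.last T) ω + v.2.2 (Fin.last T) ω * Sb T ω) + ε * m ^ (T+1) by
        simp only [hα']
        have := hterm_aux v hB ω
        linarith [this]]
      have := mul_nonneg (hB ω) (hSb T ω).le
      have hp : 0 < ε * m ^ (T+1) := by positivity
      linarith [hA ω]
  -- extract certificates via Farkas
  have certA := fun ω₀ : Ω => certificate U glike evA0 (evA (Fin.last T) ω₀) (claim1 ω₀)
  have certB := fun ω₀ : Ω => certificate U glike evA0 (evB (Fin.last T) ω₀) (claim2 ω₀)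
  have cert0 := certificate U glike 0 (-evA0) claim3
  choose cA dA μA hcA hdA hμA hPA using certA
  choose cB dB μB hcB hdB hμB hPB using certB
  obtain ⟨c0, d0, μ0, hc0, hd0, hμ0, hP0⟩ := cert0
  -- total coefficients
  set Ctot : Ω → ℝ := fun ω => 1 + c0 ω + ∑ ω₀, (cA ω₀ ω + cB ω₀ ω) with hCtot
  set Dtot : Ω → ℝ := fun ω => 1 + d0 ω + ∑ ω₀, (dA ω₀ ω + dB ω₀ ω) with hDtot
  set Mtot : ℝ := 1 + ∑ ω₀, (μA ω₀ + μB ω₀) with hMtot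
  have hCpos : ∀ ω, 0 < Ctot ω := by
    intro ω
    rw [hCtot]
    have : (0:ℝ) ≤ ∑ ω₀, (cA ω₀ ω + cB ω₀ ω) :=
      Finset.sum_nonneg fun ω₀ _ => add_nonneg (hcA ω₀ ω) (hcB ω₀ ω)
    have := hc0 ω
    dsimp only
    linarith
  have hDpos : ∀ ω, 0 < Dtot ω := by
    intro ω
    rw [hDtot]
    have : (0:ℝ) ≤ ∑ ω₀, (dA ω₀ ω + dB ω₀ ω) :=
      Finset.sum_nonneg fun ω₀ _ => add_nonneg (hdA ω₀ ω) (hdB ω₀ ω)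
    have := hd0 ω
    dsimp only
    linarith
  have hMpos : 0 < Mtot := by
    rw [hMtot]
    have : (0:ℝ) ≤ ∑ ω₀, (μA ω₀ + μB ω₀) :=
      Finset.sum_nonneg fun ω₀ _ => add_nonneg (hμA ω₀) (hμB ω₀)
    linarith
  -- the key inequality for all feasible strategy data
  have hmain : ∀ v, v ∈ U → (∀ q, glike q v ≤ 0) →
      ∑ ω, Ctot ω * v.2.1 (Fin.last T) ω + ∑ ω, Dtot ω * v.2.2 (Fin.last T) ω
        ≤ Mtot * v.1 := by
    intro v hv hg
    have keyA := fun ω₀ : Ω => hPA ω₀ v hv hg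
    have keyB := fun ω₀ : Ω => hPB ω₀ v hv hg
    have key0 := hP0 v hv hg
    simp only [evA_apply, evB_apply, evA0_apply, LinearMap.neg_apply,
      LinearMap.zero_apply, mul_zero] at keyA keyB key0
    have hsA : ∑ ω₀, (v.2.1 (Fin.last T) ω₀ + ∑ ω, cA ω₀ ω * v.2.1 (Fin.last T) ω
        + ∑ ω, dA ω₀ ω * v.2.2 (Fin.last T) ω) ≤ ∑ ω₀, μA ω₀ * v.1 :=
      Finset.sum_le_sum fun ω₀ _ => keyA ω₀
    have hsB : ∑ ω₀, (v.2.2 (Fin.last T) ω₀ + ∑ ω, cB ω₀ ω * v.2.1 (Fin.last T) ω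
        + ∑ ω, dB ω₀ ω * v.2.2 (Fin.last T) ω) ≤ ∑ ω₀, μB ω₀ * v.1 :=
      Finset.sum_le_sum fun ω₀ _ => keyB ω₀
    have expand : ∑ ω, Ctot ω * v.2.1 (Fin.last T) ω + ∑ ω, Dtot ω * v.2.2 (Fin.last T) ω
        = (-v.1 + ∑ ω, c0 ω * v.2.1 (Fin.last T) ω + ∑ ω, d0 ω * v.2.2 (Fin.last T) ω)
          + (∑ ω₀, (v.2.1 (Fin.last T) ω₀ + ∑ ω, cA ω₀ ω * v.2.1 (Fin.last T) ω
            + ∑ ω, dA ω₀ ω * v.2.2 (Fin.last T) ω))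
          + (∑ ω₀, (v.2.2 (Fin.last T) ω₀ + ∑ ω, cB ω₀ ω * v.2.1 (Fin.last T) ω
            + ∑ ω, dB ω₀ ω * v.2.2 (Fin.last T) ω)) + v.1 := by
      rw [hCtot, hDtot]
      simp only [add_mul, one_mul, Finset.sum_add_distrib, Finset.sum_mul]
      rw [Finset.sum_comm (f := fun ω ω₀ => cA ω₀ ω * v.2.1 (Fin.last T) ω),
        Finset.sum_comm (f := fun ω ω₀ => cB ω₀ ω * v.2.1 (Fin.last T) ω),
        Finset.sum_comm (f := fun ω ω₀ => dA ω₀ ω * v.2.2 (Fin.last T) ω),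
        Finset.sum_comm (f := fun ω ω₀ => dB ω₀ ω * v.2.2 (Fin.last T) ω)]
      ring
    rw [expand]
    have hμsum : ∑ ω₀, μA ω₀ * v.1 + ∑ ω₀, μB ω₀ * v.1 = (∑ ω₀, (μA ω₀ + μB ω₀)) * v.1 := by
      rw [Finset.sum_add_distrib, add_mul, Finset.sum_mul, Finset.sum_mul]
    rw [hMtot]
    nlinarith [key0, hsA, hsB, hμsum]
  -- define the discount factors
  refine ⟨fun ω => Ctot ω / (Mtot * (Q {ω}).toReal),
    fun ω => Dtot ω / (Mtot * (Q {ω}).toReal), ?_, ?_⟩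
  · intro ω
    have hq : 0 < (Q {ω}).toReal :=
      ENNReal.toReal_pos (hQfull ω).ne' (measure_ne_top Q _)
    exact ⟨div_pos (hCpos ω) (by positivity), div_pos (hDpos ω) (by positivity)⟩
  · intro α β hβ0 hSMα0 hmeas hsf ω₀
    rw [hℱ0] at hSMα0
    obtain ⟨c0α, hc⟩ := stronglyMeasurable_bot_iff.mp hSMα0
    set v : V Ω T := (c0α, fun t => α (↑t + 1), fun t => β (↑t + 1)) with hv
    have hvU : v ∈ U := by
      intro t
      exact hmeas ↑t (Nat.lt_succ_iff.mp t.isLt)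
    have hαf : ∀ p : ℕ, p ≤ T + 1 → ∀ ω, αf v p ω = α p ω := by
      intro p hp ω
      cases p with
      | zero => show v.1 = α 0 ω; rw [hc]
      | succ t =>
        rw [αf_succ v t (by omega)]
    have hβf : ∀ p : ℕ, p ≤ T + 1 → ∀ ω, βf v p ω = β p ω := by
      intro p hp ω
      cases p with
      | zero => show (0:ℝ) = β 0 ω; rw [hβ0]; rfl
      | succ t =>
        rw [βf_succ v t (by omega)]
    have hfeas : ∀ q, glike q v ≤ 0 := by
      rintro ⟨t, ω, b1, b2⟩
      have h4 := (sf_iff (hRd t ω) (hdc t ω) (hSb t ω) (hba t ω)).mp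
        (hsf t (Nat.lt_succ_iff.mp t.isLt) ω)
      have := h4 b1 b2
      rw [hglike_apply t t.isLt ω b1 b2 v]
      rw [hαf (t+1) (by omega) ω, hαf t (by omega) ω,
        hβf (t+1) (by omega) ω, hβf t (by omega) ω]
      exact this
    have hin := hmain v hvU hfeas
    have hA1 : ∀ ω, v.2.1 (Fin.last T) ω = α (T+1) ω := fun ω => rfl
    have hB1 : ∀ ω, v.2.2 (Fin.last T) ω = β (T+1) ω := fun ω => rfl
    simp only [hA1, hB1] at hin
    -- compute the integral
    have hInt : (∫ ω, ((fun ω => Ctot ω / (Mtot * (Q {ω}).toReal)) ω * α (T + 1) ω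
        + (fun ω => Dtot ω / (Mtot * (Q {ω}).toReal)) ω * β (T + 1) ω) ∂Q)
        = ∑ ω, (Q {ω}).toReal • ((fun ω => Ctot ω / (Mtot * (Q {ω}).toReal)) ω * α (T + 1) ω
          + (fun ω => Dtot ω / (Mtot * (Q {ω}).toReal)) ω * β (T + 1) ω) :=
      integral_fintype (Integrable.of_finite (μ := Q))
    rw [hInt]
    have hterm : ∀ ω : Ω, (Q {ω}).toReal • ((fun ω => Ctot ω / (Mtot * (Q {ω}).toReal)) ω
        * α (T + 1) ω + (fun ω => Dtot ω / (Mtot * (Q {ω}).toReal)) ω * β (T + 1) ω)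
        = (Ctot ω * α (T+1) ω + Dtot ω * β (T+1) ω) / Mtot := by
      intro ω
      have hq : 0 < (Q {ω}).toReal :=
        ENNReal.toReal_pos (hQfull ω).ne' (measure_ne_top Q _)
      rw [smul_eq_mul]
      field_simp
    rw [Finset.sum_congr rfl (fun ω _ => hterm ω)]
    rw [← Finset.sum_div]
    rw [div_le_iff₀ hMpos]
    calc ∑ ω, (Ctot ω * α (T + 1) ω + Dtot ω * β (T + 1) ω)
        = ∑ ω, Ctot ω * α (T + 1) ω + ∑ ω, Dtot ω * β (T + 1) ω :=
          Finset.sum_add_distrib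
      _ ≤ Mtot * v.1 := hin
      _ = α 0 ω₀ * Mtot := by rw [show v.1 = α 0 ω₀ from by rw [hc]]; ring
end

section
/- Let Z = (Z^R, Z^S) be an F_t-measurable ℝ²-valued random vector such that E_Q[Z^R α + Z^S β] ≥ 0 for all F_t-measurable random variables α, β with ϑ_t(α,β) = α + β⁺S^b_t − β⁻S^a_t ≥ 0. Then Z^R ≥ 0, Z^S ≥ 0, and Z^R S^b_t ≤ Z^S ≤ Z^R S^a_t everywhere. -/
open MeasureTheory

lemma key_zero_of_nonpos {Ω : Type*} [Fintype Ω] {m0 : MeasurableSpace Ω}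
    [MeasurableSingletonClass Ω] (Q : Measure Ω) [IsFiniteMeasure Q]
    (hQfull : ∀ ω, 0 < Q {ω}) (f : Ω → ℝ) (hf : ∀ ω, f ω ≤ 0)
    (hint : 0 ≤ ∫ ω, f ω ∂Q) : ∀ ω, f ω = 0 := by
  rw [integral_fintype (Integrable.of_finite)] at hint
  have hsum : ∑ ω, (Q {ω}).toReal • f ω = 0 := by
    refine le_antisymm (Finset.sum_nonpos fun ω _ => ?_) hint
    exact smul_nonpos_of_nonneg_of_nonpos ENNReal.toReal_nonneg (hf ω)
  have := (Finset.sum_eq_zero_iff_of_nonpos (fun ω _ =>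
    smul_nonpos_of_nonneg_of_nonpos ENNReal.toReal_nonneg (hf ω))).mp hsum
  intro ω
  have hω := this ω (Finset.mem_univ ω)
  have hpos : 0 < (Q {ω}).toReal :=
    ENNReal.toReal_pos (hQfull ω).ne' (measure_ne_top Q _)
  simpa [smul_eq_mul, hpos.ne'] using hω

/-- If `Z = (Z^R, Z^S)` is `F_t`-measurable and `E_Q[Z^R α + Z^S β] ≥ 0` for all
`F_t`-measurable `α, β` with `ϑ_t(α,β) ≥ 0`, then `Z^R, Z^S ≥ 0` and
`Z^R S^b_t ≤ Z^S ≤ Z^R S^a_t` everywhere. -/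
theorem consistent_prices_from_positivity
    {Ω : Type*} [Fintype Ω] {m0 : MeasurableSpace Ω} [MeasurableSingletonClass Ω]
    (Q : Measure Ω) [IsProbabilityMeasure Q] (hQfull : ∀ ω, 0 < Q {ω})
    (m : MeasurableSpace Ω) (hm : m ≤ m0)
    (Sb Sa : Ω → ℝ) (hSb : ∀ ω, 0 < Sb ω) (hba : ∀ ω, Sb ω ≤ Sa ω)
    (hSbm : StronglyMeasurable[m] Sb) (hSam : StronglyMeasurable[m] Sa)
    (ZR ZS : Ω → ℝ) (hZRm : StronglyMeasurable[m] ZR) (hZSm : StronglyMeasurable[m] ZS)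
    (hpos : ∀ α β : Ω → ℝ, StronglyMeasurable[m] α → StronglyMeasurable[m] β →
      (∀ ω, 0 ≤ α ω + max (β ω) 0 * Sb ω - max (-(β ω)) 0 * Sa ω) →
      0 ≤ ∫ ω, (ZR ω * α ω + ZS ω * β ω) ∂Q) :
    ∀ ω, 0 ≤ ZR ω ∧ 0 ≤ ZS ω ∧ ZR ω * Sb ω ≤ ZS ω ∧ ZS ω ≤ ZR ω * Sa ω := by
  -- Part 1: ZR ≥ 0
  have h1 : ∀ ω, 0 ≤ ZR ω := by
    set A : Set Ω := {ω | ZR ω < 0} with hA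
    have hAm : MeasurableSet[m] A := measurableSet_lt hZRm.measurable measurable_const
    have hαm : StronglyMeasurable[m] (A.indicator (fun _ => (1:ℝ))) :=
      stronglyMeasurable_const.indicator hAm
    have hI := hpos (A.indicator fun _ => 1) 0 hαm stronglyMeasurable_const
      (fun ω => by simp [Set.indicator_apply]; positivity)
    have hzero := key_zero_of_nonpos Q hQfull
      (fun ω => ZR ω * (A.indicator fun _ => 1) ω + ZS ω * (0:ℝ))
      (fun ω => by
        by_cases h : ω ∈ A
        · simp only [Set.indicator_of_mem h, mul_one, mul_zero, add_zero]
          exact le_of_lt h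
        · simp [Set.indicator_of_notMem h]) hI
    intro ω
    by_contra hc
    push_neg at hc
    have hmem : ω ∈ A := hc
    have := hzero ω
    simp only [Set.indicator_of_mem hmem] at this
    simp at this
    exact absurd this (ne_of_lt hc)
  -- Part 2: ZS ≥ 0
  have h2 : ∀ ω, 0 ≤ ZS ω := by
    set A : Set Ω := {ω | ZS ω < 0} with hA
    have hAm : MeasurableSet[m] A := measurableSet_lt hZSm.measurable measurable_const
    have hβm : StronglyMeasurable[m] (A.indicator (fun _ => (1:ℝ))) :=
      stronglyMeasurable_const.indicator hAm
    have hI := hpos 0 (A.indicator fun _ => 1) stronglyMeasurable_const hβm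
      (fun ω => by
        by_cases h : ω ∈ A <;>
          simp [Set.indicator_of_mem, Set.indicator_of_notMem, h, (hSb ω).le])
    have hzero := key_zero_of_nonpos Q hQfull
      (fun ω => ZR ω * (0:ℝ) + ZS ω * (A.indicator fun _ => 1) ω)
      (fun ω => by
        by_cases h : ω ∈ A
        · simp only [Set.indicator_of_mem h, mul_one, mul_zero, zero_add]
          exact le_of_lt h
        · simp [Set.indicator_of_notMem h]) hI
    intro ω
    by_contra hc
    push_neg at hc
    have hmem : ω ∈ A := hc
    have := hzero ω
    simp only [Set.indicator_of_mem hmem] at this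
    simp at this
    exact absurd this (ne_of_lt hc)
  -- Part 3: ZS ≤ ZR * Sa  (use β = -1_A, α = Sa * 1_A, A = {ZR*Sa < ZS})
  have h4 : ∀ ω, ZS ω ≤ ZR ω * Sa ω := by
    set A : Set Ω := {ω | ZR ω * Sa ω < ZS ω} with hA
    have hAm : MeasurableSet[m] A :=
      measurableSet_lt (hZRm.mul hSam).measurable hZSm.measurable
    have hαm : StronglyMeasurable[m] (A.indicator Sa) := hSam.indicator hAm
    have hβm : StronglyMeasurable[m] (fun ω => -(A.indicator (fun _ => (1:ℝ)) ω)) :=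
      (stronglyMeasurable_const.indicator hAm).neg
    have hI := hpos (A.indicator Sa) (fun ω => -(A.indicator (fun _ => (1:ℝ)) ω)) hαm hβm
      (fun ω => by
        by_cases h : ω ∈ A <;>
          simp [Set.indicator_of_mem, Set.indicator_of_notMem, h,
            max_eq_left, neg_nonpos_of_nonneg])
    have hzero := key_zero_of_nonpos Q hQfull
      (fun ω => ZR ω * A.indicator Sa ω + ZS ω * (-(A.indicator (fun _ => (1:ℝ)) ω)))
      (fun ω => by
        by_cases h : ω ∈ A
        · simp only [Set.indicator_of_mem h, mul_one, mul_neg]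
          have : ZR ω * Sa ω < ZS ω := h
          linarith
        · simp [Set.indicator_of_notMem h]) hI
    intro ω
    by_contra hc
    push_neg at hc
    have hmem : ω ∈ A := hc
    have := hzero ω
    simp only [Set.indicator_of_mem hmem, mul_one, mul_neg] at this
    have hlt : ZR ω * Sa ω < ZS ω := hc
    linarith
  -- Part 4: ZR * Sb ≤ ZS  (use β = 1_B, α = -Sb * 1_B, B = {ZS < ZR*Sb})
  have h3 : ∀ ω, ZR ω * Sb ω ≤ ZS ω := by
    set A : Set Ω := {ω | ZS ω < ZR ω * Sb ω} with hA
    have hAm : MeasurableSet[m] A :=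
      measurableSet_lt hZSm.measurable (hZRm.mul hSbm).measurable
    have hαm : StronglyMeasurable[m] (fun ω => -(A.indicator Sb ω)) :=
      (hSbm.indicator hAm).neg
    have hβm : StronglyMeasurable[m] (A.indicator (fun _ => (1:ℝ))) :=
      stronglyMeasurable_const.indicator hAm
    have hI := hpos (fun ω => -(A.indicator Sb ω)) (A.indicator (fun _ => (1:ℝ))) hαm hβm
      (fun ω => by
        by_cases h : ω ∈ A <;>
          simp [Set.indicator_of_mem, Set.indicator_of_notMem, h,
            max_eq_left, neg_nonpos_of_nonneg])
    have hzero := key_zero_of_nonpos Q hQfull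
      (fun ω => ZR ω * (-(A.indicator Sb ω)) + ZS ω * A.indicator (fun _ => (1:ℝ)) ω)
      (fun ω => by
        by_cases h : ω ∈ A
        · simp only [Set.indicator_of_mem h, mul_one, mul_neg]
          have : ZS ω < ZR ω * Sb ω := h
          linarith
        · simp [Set.indicator_of_notMem h]) hI
    intro ω
    by_contra hc
    push_neg at hc
    have hmem : ω ∈ A := hc
    have := hzero ω
    simp only [Set.indicator_of_mem hmem, mul_one, mul_neg] at this
    have hlt : ZS ω < ZR ω * Sb ω := hc
    linarith
  exact fun ω => ⟨h1 ω, h2 ω, h3 ω, h4 ω⟩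
end

section
/- Given a consistent pricing system Z = (Z^R, Z^S) with associated predictable rate process R and deflator B, define the measure P by P({ω}) = B_T(ω) Z^R_T(ω) Q({ω}) and the process S_t = Z^S_t / Z^R_t. Then P is a probability measure equivalent to Q, S^b ≤ S ≤ S^a, R^d ≤ R ≤ R^c, and S/B is a P-martingale; i.e. (P, S, R) is an equivalent martingale triple. -/
open MeasureTheory Finset

/-- From a consistent pricing system `(Z^R, Z^S)` with associated rate process `R`
and deflator `B`, the measure `P({ω}) = B_T(ω) Z^R_T(ω) Q({ω})` and the price
`S_t = Z^S_t / Z^R_t` form an equivalent martingale triple. -/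
theorem cps_to_emt
    {Ω : Type*} [Fintype Ω] [Nonempty Ω] {m0 : MeasurableSpace Ω}
    [MeasurableSingletonClass Ω]
    (ℱ : Filtration ℕ m0) (T : ℕ) (hℱ0 : (ℱ 0 : MeasurableSpace Ω) = ⊥)
    (Q : Measure Ω) [IsProbabilityMeasure Q] (hQfull : ∀ ω, 0 < Q {ω})
    (Sb Sa Rd Rc : ℕ → Ω → ℝ)
    (hSb : ∀ t ω, 0 < Sb t ω) (hba : ∀ t ω, Sb t ω ≤ Sa t ω)
    (hRd : ∀ t ω, 0 < Rd t ω) (hdc : ∀ t ω, Rd t ω ≤ Rc t ω)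
    (ZR ZS : ℕ → Ω → ℝ) (R : ℕ → Ω → ℝ)
    (hZRadapt : Adapted ℱ ZR) (hZSadapt : Adapted ℱ ZS)
    (hZpos : ∀ t ω, 0 < ZR t ω ∧ 0 < ZS t ω)
    (hwedge : ∀ t ≤ T, ∀ ω, Sb t ω ≤ ZS t ω / ZR t ω ∧ ZS t ω / ZR t ω ≤ Sa t ω)
    (hR0 : StronglyMeasurable[ℱ 0] (R 0))
    (hRpred : ∀ t, StronglyMeasurable[ℱ t] (R (t + 1)))
    (hRbd : ∀ t ≤ T, ∀ ω, Rd t ω ≤ R t ω ∧ R t ω ≤ Rc t ω)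
    -- Z^S is a Q-martingale
    (hZSmart : ∀ t < T, Q[ZS (t + 1)|ℱ t] =ᵐ[Q] ZS t)
    -- B Z^R is a Q-martingale
    (hBZRmart : ∀ t < T,
      Q[fun ω => (∏ s ∈ Finset.range (t + 2), R s ω) * ZR (t + 1) ω|ℱ t]
        =ᵐ[Q] fun ω => (∏ s ∈ Finset.range (t + 1), R s ω) * ZR t ω)
    -- normalisation
    (hnorm : ∀ ω, R 0 ω * ZR 0 ω = 1) :
    ∀ P : Measure Ω,
      P = (Q.withDensity fun ω =>
        ENNReal.ofReal ((∏ s ∈ Finset.range (T + 1), R s ω) * ZR T ω)) →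
      IsProbabilityMeasure P ∧ P ≪ Q ∧ Q ≪ P ∧
      (∀ t ≤ T, ∀ ω,
        Sb t ω ≤ ZS t ω / ZR t ω ∧ ZS t ω / ZR t ω ≤ Sa t ω ∧
        Rd t ω ≤ R t ω ∧ R t ω ≤ Rc t ω) ∧
      -- S/B is a P-martingale
      (∀ t < T,
        P[fun ω => (ZS (t + 1) ω / ZR (t + 1) ω) / ∏ s ∈ Finset.range (t + 2), R s ω|ℱ t]
          =ᵐ[P] fun ω => (ZS t ω / ZR t ω) / ∏ s ∈ Finset.range (t + 1), R s ω) := by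
  intro P hP
  -- the density
  set h : Ω → ℝ := fun ω => (∏ s ∈ Finset.range (T + 1), R s ω) * ZR T ω with hh
  -- positivity of R up to time T
  have hRpos : ∀ t ≤ T, ∀ ω, 0 < R t ω := fun t ht ω =>
    lt_of_lt_of_le (hRd t ω) (hRbd t ht ω).1
  -- positivity of the deflator B
  have hBpos : ∀ t ≤ T, ∀ ω, 0 < ∏ s ∈ Finset.range (t + 1), R s ω := by
    intro t ht ω
    refine Finset.prod_pos fun s hs => hRpos s ?_ ω
    have := Finset.mem_range.mp hs; omega
  have hhpos : ∀ ω, 0 < h ω := fun ω =>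
    mul_pos (hBpos T le_rfl ω) (hZpos T ω).1
  -- B_t is ℱ t - strongly measurable
  have hBSM : ∀ t, StronglyMeasurable[ℱ t] fun ω => ∏ s ∈ Finset.range (t + 1), R s ω := by
    intro t
    refine Finset.stronglyMeasurable_fun_prod _ fun s hs => ?_
    have hs' : s ≤ t := by have := Finset.mem_range.mp hs; omega
    cases s with
    | zero => exact hR0.mono (ℱ.mono (Nat.zero_le t))
    | succ k => exact (hRpred k).mono (ℱ.mono (by omega))
  -- set integrals with respect to P are set integrals with density against Q
  have hPint : ∀ (g : Ω → ℝ) (A : Set Ω), MeasurableSet A →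
      ∫ ω in A, g ω ∂P = ∫ ω in A, g ω * h ω ∂Q := by
    intro g A hA
    rw [hP, restrict_withDensity hA]
    have : (fun ω => ENNReal.ofReal (h ω)) =
        fun ω => ((Real.toNNReal (h ω) : NNReal) : ENNReal) := by
        funext ω; simp [ENNReal.ofReal]
    rw [this, integral_withDensity_eq_integral_smul Measurable.of_discrete]
    refine integral_congr_ae (Filter.Eventually.of_forall fun ω => ?_)
    simp only [NNReal.smul_def, Real.coe_toNNReal _ (hhpos ω).le, smul_eq_mul]
    exact mul_comm _ _
  -- key lemma: for ℱ t-measurable g and A ∈ ℱ t, the integral of g·B_u·ZR_u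
  -- over A is independent of u for t ≤ u ≤ T
  have keyL : ∀ (t : ℕ) (g : Ω → ℝ), StronglyMeasurable[ℱ t] g →
      ∀ (A : Set Ω), MeasurableSet[ℱ t] A → ∀ u, t ≤ u → u ≤ T →
      ∫ ω in A, g ω * ((∏ s ∈ Finset.range (u + 1), R s ω) * ZR u ω) ∂Q
        = ∫ ω in A, g ω * ((∏ s ∈ Finset.range (t + 1), R s ω) * ZR t ω) ∂Q := by
    intro t g hg A hA u htu
    induction u, htu using Nat.le_induction with
    | base => intro _; rfl
    | succ u htu ih =>
      intro huT
      have huT' : u < T := by omega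
      have hAu : MeasurableSet[ℱ u] A := (ℱ.mono htu) A hA
      have hA0 : MeasurableSet A := (ℱ.le u) A hAu
      have hgu : StronglyMeasurable[ℱ u] g := hg.mono (ℱ.mono htu)
      have hstep :
          ∫ ω in A, g ω * ((∏ s ∈ Finset.range (u + 1 + 1), R s ω) * ZR (u + 1) ω) ∂Q
            = ∫ ω in A, g ω * ((∏ s ∈ Finset.range (u + 1), R s ω) * ZR u ω) ∂Q := by
        have e1 := (setIntegral_condExp (μ := Q) (ℱ.le u)
          (Integrable.of_finite (μ := Q) (f := fun ω =>
            g ω * ((∏ s ∈ Finset.range (u + 2), R s ω) * ZR (u + 1) ω))) hAu).symm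
        have e2 : Q[fun ω => g ω * ((∏ s ∈ Finset.range (u + 2), R s ω) * ZR (u + 1) ω)|ℱ u]
            =ᵐ[Q] fun ω => g ω *
              (Q[fun ω => (∏ s ∈ Finset.range (u + 2), R s ω) * ZR (u + 1) ω|ℱ u]) ω :=
          condExp_mul_of_stronglyMeasurable_left hgu Integrable.of_finite Integrable.of_finite
        have e3 : Q[fun ω => g ω * ((∏ s ∈ Finset.range (u + 2), R s ω) * ZR (u + 1) ω)|ℱ u]
            =ᵐ[Q] fun ω => g ω * ((∏ s ∈ Finset.range (u + 1), R s ω) * ZR u ω) := by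
          filter_upwards [e2, hBZRmart u huT'] with ω h1 h2
          rw [h1]; simp only [h2]
        calc
          ∫ ω in A, g ω * ((∏ s ∈ Finset.range (u + 1 + 1), R s ω) * ZR (u + 1) ω) ∂Q
              = ∫ ω in A,
                (Q[fun ω => g ω * ((∏ s ∈ Finset.range (u + 2), R s ω) * ZR (u + 1) ω)|ℱ u]) ω
                  ∂Q := e1
          _ = ∫ ω in A, g ω * ((∏ s ∈ Finset.range (u + 1), R s ω) * ZR u ω) ∂Q := by
              refine setIntegral_congr_ae hA0 ?_
              filter_upwards [e3] with ω hω _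
              exact hω
      exact hstep.trans (ih (by omega))
  -- P is a probability measure
  have hprob : IsProbabilityMeasure P := by
    constructor
    rw [hP, withDensity_apply _ MeasurableSet.univ, Measure.restrict_univ,
      ← ofReal_integral_eq_lintegral_ofReal Integrable.of_finite
        (Filter.Eventually.of_forall fun ω => (hhpos ω).le)]
    have h1 : ∫ ω, h ω ∂Q = ∫ ω in Set.univ, (fun _ => (1 : ℝ)) ω * h ω ∂Q := by
      rw [setIntegral_univ]
      exact integral_congr_ae (Filter.Eventually.of_forall fun ω => by simp)
    have h2 := keyL 0 (fun _ => (1 : ℝ)) stronglyMeasurable_const Set.univ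
      MeasurableSet.univ T (Nat.zero_le T) le_rfl
    have h3 : ∫ ω in Set.univ,
        (fun _ => (1 : ℝ)) ω * ((∏ s ∈ Finset.range (0 + 1), R s ω) * ZR 0 ω) ∂Q = 1 := by
      rw [setIntegral_univ]
      have : ∀ ω, (fun _ => (1 : ℝ)) ω * ((∏ s ∈ Finset.range (0 + 1), R s ω) * ZR 0 ω)
          = 1 := by
        intro ω
        simp [Finset.prod_range_one, hnorm ω]
      rw [integral_congr_ae (Filter.Eventually.of_forall this)]
      simp
    rw [h1, h2, h3]
    simp
  haveI := hprob
  refine ⟨hprob, ?_, ?_, ?_, ?_⟩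
  · rw [hP]; exact withDensity_absolutelyContinuous _ _
  · -- Q ≪ P
    refine Measure.AbsolutelyContinuous.mk fun A hAm hPA => ?_
    by_contra hQA
    have hAne : A.Nonempty := by
      by_contra hne
      rw [Set.not_nonempty_iff_eq_empty] at hne
      subst hne; simp at hQA
    obtain ⟨ω, hω⟩ := hAne
    have hsub : P {ω} ≤ P A := measure_mono (Set.singleton_subset_iff.mpr hω)
    rw [hPA] at hsub
    have hPω : P {ω} = ENNReal.ofReal (h ω) * Q {ω} := by
      rw [hP, withDensity_apply _ (measurableSet_singleton ω), lintegral_singleton]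
    have hne : P {ω} ≠ 0 := by
      rw [hPω]
      exact ENNReal.mul_pos (ENNReal.ofReal_pos.mpr (hhpos ω)).ne' (hQfull ω).ne' |>.ne'
    exact hne (le_antisymm hsub (by positivity))
  · -- wedge and rate bounds
    intro t ht ω
    exact ⟨(hwedge t ht ω).1, (hwedge t ht ω).2, (hRbd t ht ω).1, (hRbd t ht ω).2⟩
  · -- the martingale property under P
    intro t ht
    set X : Ω → ℝ := fun ω => (ZS t ω / ZR t ω) / ∏ s ∈ Finset.range (t + 1), R s ω with hX
    set Y : Ω → ℝ := fun ω =>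
      (ZS (t + 1) ω / ZR (t + 1) ω) / ∏ s ∈ Finset.range (t + 2), R s ω with hY
    have hXSM : StronglyMeasurable[ℱ t] X := by
      have : Measurable[ℱ t] X :=
        (((show Measurable[ℱ t] (ZS t) from hZSadapt t).div (show Measurable[ℱ t] (ZR t) from hZRadapt t)).div (hBSM t).measurable)
      exact this.stronglyMeasurable
    symm
    refine ae_eq_condExp_of_forall_setIntegral_eq (ℱ.le t) Integrable.of_finite
      (fun s _ _ => Integrable.of_finite.integrableOn) (fun A hA _ => ?_)
      hXSM.aestronglyMeasurable
    have hA0 : MeasurableSet A := (ℱ.le t) A hA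
    have hA1 : MeasurableSet[ℱ (t + 1)] A := (ℱ.mono (Nat.le_succ t)) A hA
    have hY1 : StronglyMeasurable[ℱ (t + 1)] Y := by
      have : Measurable[ℱ (t + 1)] Y :=
        (((show Measurable[ℱ (t + 1)] (ZS (t + 1)) from hZSadapt (t + 1)).div (show Measurable[ℱ (t + 1)] (ZR (t + 1)) from hZRadapt (t + 1))).div
          (hBSM (t + 1)).measurable)
      exact this.stronglyMeasurable
    rw [hPint X A hA0, hPint Y A hA0]
    -- left side: X against the density
    have hXside : ∫ ω in A, X ω * h ω ∂Q = ∫ ω in A, ZS t ω ∂Q := by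
      rw [keyL t X hXSM A hA T (le_of_lt ht) le_rfl]
      refine setIntegral_congr_ae hA0 (Filter.Eventually.of_forall fun ω _ => ?_)
      have hB := (hBpos t (le_of_lt ht) ω).ne'
      have hZ := (hZpos t ω).1.ne'
      field_simp [hX]
      simp only [hX]; field_simp
    -- right side: Y against the density
    have hYside : ∫ ω in A, Y ω * h ω ∂Q = ∫ ω in A, ZS (t + 1) ω ∂Q := by
      rw [keyL (t + 1) Y hY1 A hA1 T ht le_rfl]
      refine setIntegral_congr_ae hA0 (Filter.Eventually.of_forall fun ω _ => ?_)
      have hB := (hBpos (t + 1) ht ω).ne'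
      have hZ := (hZpos (t + 1) ω).1.ne'
      field_simp [hY]
      simp only [hY]; field_simp
    -- connect via the martingale property of ZS
    have hZSstep : ∫ ω in A, ZS (t + 1) ω ∂Q = ∫ ω in A, ZS t ω ∂Q := by
      rw [← setIntegral_condExp (ℱ.le t) (Integrable.of_finite (f := ZS (t + 1))) hA]
      refine setIntegral_congr_ae hA0 ?_
      filter_upwards [hZSmart t ht] with ω hω _
      exact hω
    rw [hXside, hYside, hZSstep]
end

section
/- Given an equivalent martingale triple (P,S,R) with deflator B, define Z^R_T = (1/B_T)(dP/dQ), Z^R_t = R_{t+1} E_Q[Z^R_{t+1} | F_t] for t < T, and Z^S_t = S_t Z^R_t for all t. Then Z^S is a Q-martingale, B Z^R is a Q-martingale, both Z^R and Z^S are strictly positive, and S^b_t ≤ Z^S_t/Z^R_t ≤ S^a_t; i.e. (Z^R, Z^S) is a consistent pricing system. -/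
open MeasureTheory Finset
open scoped ENNReal NNReal

section Aux
variable {Ω : Type*} [Fintype Ω] {m : MeasurableSpace Ω} {m0 : MeasurableSpace Ω}
  [MeasurableSingletonClass Ω] {μ : Measure Ω}

omit [Fintype Ω] [MeasurableSingletonClass Ω] in
lemma full_ae (hfull : ∀ ω, 0 < μ {ω}) {p : Ω → Prop} (h : ∀ᵐ ω ∂μ, p ω) : ∀ ω, p ω := by
  intro ω
  by_contra hc
  have h0 := ae_iff.mp h
  have h2 : μ {ω} ≤ μ {a | ¬ p a} := measure_mono (by simpa using hc)
  rw [h0] at h2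
  exact absurd (le_antisymm h2 zero_le) (hfull ω).ne'

lemma setintegral_mul_condexp [IsProbabilityMeasure μ] (hm : m ≤ m0)
    {g f : Ω → ℝ} (hg : StronglyMeasurable[m] g) {A : Set Ω} (hA : MeasurableSet[m] A) :
    ∫ ω in A, g ω * (μ[f|m]) ω ∂μ = ∫ ω in A, g ω * f ω ∂μ := by
  have hint1 : Integrable (g * f) μ := .of_finite
  have hint2 : Integrable f μ := .of_finite
  have h1 : μ[g * f|m] =ᵐ[μ] g * μ[f|m] :=
    condExp_mul_of_stronglyMeasurable_left hg hint1 hint2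
  calc ∫ ω in A, g ω * (μ[f|m]) ω ∂μ = ∫ ω in A, (μ[g * f|m]) ω ∂μ :=
        (setIntegral_congr_ae (μ := μ) (hm _ hA) (h1.mono fun ω hω _ => hω)).symm
    _ = ∫ ω in A, (g * f) ω ∂μ := setIntegral_condExp hm hint1 hA
    _ = _ := rfl

lemma condexp_pos_full [IsProbabilityMeasure μ] (hfull : ∀ ω, 0 < μ {ω})
    (hm : m ≤ m0) {f : Ω → ℝ} (hf : ∀ ω, 0 < f ω) :
    ∀ ω, 0 < (μ[f|m]) ω := by
  by_contra hc
  push_neg at hc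
  obtain ⟨ω0, hω0⟩ := hc
  have hintf : Integrable f μ := .of_finite
  have hAm : MeasurableSet[m] ((μ[f|m]) ⁻¹' Set.Iic 0) :=
    (stronglyMeasurable_condExp (f := f) (m := m) (μ := μ)).measurable measurableSet_Iic
  have h1 : ∫ ω in (μ[f|m]) ⁻¹' Set.Iic 0, (μ[f|m]) ω ∂μ
      = ∫ ω in (μ[f|m]) ⁻¹' Set.Iic 0, f ω ∂μ := setIntegral_condExp hm hintf hAm
  have h2 : ∫ ω in (μ[f|m]) ⁻¹' Set.Iic 0, (μ[f|m]) ω ∂μ ≤ 0 := by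
    refine integral_nonpos_of_ae ?_
    exact (ae_restrict_iff' (μ := μ) (hm _ hAm)).mpr (ae_of_all _ fun ω hω => hω)
  have h3 : 0 < ∫ ω in (μ[f|m]) ⁻¹' Set.Iic 0, f ω ∂μ := by
    refine (setIntegral_pos_iff_support_of_nonneg_ae (μ := μ) (ae_of_all _ fun ω => (hf ω).le)
      (hintf.integrableOn)).mpr ?_
    refine lt_of_lt_of_le (hfull ω0) (measure_mono ?_)
    intro x hx
    rcases hx with rfl
    exact ⟨(hf x).ne', hω0⟩
  rw [h1] at h2
  exact absurd h3 (not_lt.mpr h2)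

lemma setintegral_density [IsProbabilityMeasure μ] {D : Ω → ℝ} (hD : ∀ ω, 0 < D ω)
    (f : Ω → ℝ) {A : Set Ω} (hA : MeasurableSet A) :
    ∫ ω in A, f ω ∂(μ.withDensity fun ω => ENNReal.ofReal (D ω)) = ∫ ω in A, f ω * D ω ∂μ := by
  have h : (fun ω => ENNReal.ofReal (D ω)) = fun ω => (((fun x => (D x).toNNReal)) ω : ℝ≥0∞) := rfl
  rw [h, setIntegral_withDensity_eq_setIntegral_smul (f := fun x => (D x).toNNReal) Measurable.of_discrete f hA]
  refine setIntegral_congr_fun hA fun ω _ => ?_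
  simp [NNReal.smul_def, Real.coe_toNNReal _ (hD ω).le, mul_comm]

end Aux

/-- Given an equivalent martingale triple `(P, S, R)` with deflator `B` and density
`D = dP/dQ`, the processes `Z^R_T = (1/B_T) D`, `Z^R_t = R_{t+1} E_Q[Z^R_{t+1}|F_t]`,
`Z^S = S Z^R` form a consistent pricing system: `Z^S` and `B Z^R` are strictly
positive `Q`-martingales and `S^b_t ≤ Z^S_t / Z^R_t ≤ S^a_t`. -/
theorem emt_to_cps
    {Ω : Type*} [Fintype Ω] [Nonempty Ω] {m0 : MeasurableSpace Ω}
    [MeasurableSingletonClass Ω]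
    (ℱ : Filtration ℕ m0) (T : ℕ)
    (Q P : Measure Ω) [IsProbabilityMeasure Q] [IsProbabilityMeasure P]
    (hQfull : ∀ ω, 0 < Q {ω})
    (D : Ω → ℝ) (hD : ∀ ω, 0 < D ω)
    (hP : P = Q.withDensity fun ω => ENNReal.ofReal (D ω))
    (Sb Sa S Rd Rc R : ℕ → Ω → ℝ)
    (hSb : ∀ t ω, 0 < Sb t ω) (hba : ∀ t ω, Sb t ω ≤ Sa t ω)
    (hRd : ∀ t ω, 0 < Rd t ω) (hdc : ∀ t ω, Rd t ω ≤ Rc t ω)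
    (hSadapt : Adapted ℱ S)
    (hRpred : ∀ t, StronglyMeasurable[ℱ t] (R (t + 1)))
    (hSbd : ∀ t ≤ T, ∀ ω, Sb t ω ≤ S t ω ∧ S t ω ≤ Sa t ω)
    (hRbd : ∀ t ≤ T, ∀ ω, Rd t ω ≤ R t ω ∧ R t ω ≤ Rc t ω)
    -- S/B is a P-martingale
    (hmart : ∀ t < T,
      P[fun ω => S (t + 1) ω / ∏ s ∈ Finset.range (t + 2), R s ω|ℱ t]
        =ᵐ[P] fun ω => S t ω / ∏ s ∈ Finset.range (t + 1), R s ω)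
    (ZR ZS : ℕ → Ω → ℝ)
    (hZRT : ∀ ω, ZR T ω = (1 / ∏ s ∈ Finset.range (T + 1), R s ω) * D ω)
    (hZRt : ∀ t < T, ∀ ω, ZR t ω = R (t + 1) ω * (Q[ZR (t + 1)|ℱ t]) ω)
    (hZS : ∀ t ω, ZS t ω = S t ω * ZR t ω) :
    (∀ t < T, Q[ZS (t + 1)|ℱ t] =ᵐ[Q] ZS t) ∧
      (∀ t < T,
        Q[fun ω => (∏ s ∈ Finset.range (t + 2), R s ω) * ZR (t + 1) ω|ℱ t]
          =ᵐ[Q] fun ω => (∏ s ∈ Finset.range (t + 1), R s ω) * ZR t ω) ∧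
      (∀ t ≤ T, ∀ ω, 0 < ZR t ω ∧ 0 < ZS t ω) ∧
      (∀ t ≤ T, ∀ ω, Sb t ω ≤ ZS t ω / ZR t ω ∧ ZS t ω / ZR t ω ≤ Sa t ω) := by
  have hRpos : ∀ s ≤ T, ∀ ω, 0 < R s ω := fun s hs ω => (hRd s ω).trans_le ((hRbd s hs ω).1)
  have hBpos : ∀ t ≤ T, ∀ ω, 0 < ∏ s ∈ Finset.range (t + 1), R s ω := fun t ht ω =>
    Finset.prod_pos fun s hs =>
      hRpos s (le_trans (Nat.lt_succ_iff.mp (Finset.mem_range.mp hs)) ht) ω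
  have hSpos : ∀ t ≤ T, ∀ ω, 0 < S t ω := fun t ht ω => (hSb t ω).trans_le (hSbd t ht ω).1
  -- P has full support
  have hPfull : ∀ ω, 0 < P {ω} := by
    intro ω
    rw [hP, withDensity_apply _ (measurableSet_singleton ω), lintegral_singleton]
    exact ENNReal.mul_pos (ENNReal.ofReal_pos.mpr (hD ω)).ne' (hQfull ω).ne'
  -- R 0 is ℱ 0 measurable when T > 0
  have hR0 : 0 < T → StronglyMeasurable[ℱ 0] (R 0) := by
    intro hT
    have h0 := full_ae hPfull (hmart 0 hT)
    have hgm : StronglyMeasurable[ℱ 0]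
        (P[fun ω => S 1 ω / ∏ s ∈ Finset.range 2, R s ω|ℱ 0]) := stronglyMeasurable_condExp
    have hgt : ∀ ω, (P[fun ω => S 1 ω / ∏ s ∈ Finset.range 2, R s ω|ℱ 0]) ω
        = S 0 ω / R 0 ω := by
      intro ω
      have := h0 ω
      simpa [Finset.prod_range_one] using this
    have hR0eq : R 0 = fun ω =>
        S 0 ω / (P[fun ω => S 1 ω / ∏ s ∈ Finset.range 2, R s ω|ℱ 0]) ω := by
      funext ω
      rw [hgt ω]
      have hs := (hSpos 0 (Nat.zero_le T) ω).ne'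
      have hr := (hRpos 0 (Nat.zero_le T) ω).ne'
      field_simp
    rw [hR0eq]
    exact ((hSadapt 0).div hgm.measurable).stronglyMeasurable
  have hRsm : ∀ t, 0 < T → ∀ s, s ≤ t + 1 → StronglyMeasurable[ℱ t] (R s) := by
    intro t hT s hs
    match s with
    | 0 => exact (hR0 hT).mono (ℱ.mono (Nat.zero_le t))
    | (u + 1) => exact (hRpred u).mono (ℱ.mono (by omega))
  have hBm : ∀ t, 0 < T → ∀ n ≤ t + 2,
      StronglyMeasurable[ℱ t] (fun ω => ∏ s ∈ Finset.range n, R s ω) := by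
    intro t hT n hn
    refine Measurable.stronglyMeasurable ?_
    refine Finset.measurable_prod _ fun s hs => ?_
    exact (hRsm t hT s (by have := Finset.mem_range.mp hs; omega)).measurable
  -- key integral identity
  have key : ∀ d t, t + d = T → ∀ h : Ω → ℝ, StronglyMeasurable[ℱ t] h →
      ∀ A : Set Ω, MeasurableSet[ℱ t] A →
      ∫ ω in A, h ω * ((∏ s ∈ Finset.range (t + 1), R s ω) * ZR t ω) ∂Q
        = ∫ ω in A, h ω * D ω ∂Q := by
    intro d
    induction d with
    | zero =>
      intro t ht h hh A hA
      have ht' : t = T := by omega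
      subst ht'
      refine setIntegral_congr_fun (ℱ.le t _ hA) fun ω _ => ?_
      have hcancel : (∏ s ∈ Finset.range (t + 1), R s ω)
          * ((1 / ∏ s ∈ Finset.range (t + 1), R s ω) * D ω) = D ω := by
        have hB := (hBpos t le_rfl ω).ne'
        field_simp
      rw [hZRT ω, hcancel]
    | succ d ih =>
      intro t ht h hh A hA
      have htT : t < T := by omega
      calc ∫ ω in A, h ω * ((∏ s ∈ Finset.range (t + 1), R s ω) * ZR t ω) ∂Q
          = ∫ ω in A, (fun ω => h ω * ∏ s ∈ Finset.range (t + 2), R s ω) ω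
              * (Q[ZR (t + 1)|ℱ t]) ω ∂Q := by
            refine setIntegral_congr_fun (ℱ.le t _ hA) fun ω _ => ?_
            simp only
            have hprod : ∏ s ∈ Finset.range (t + 2), R s ω
                = (∏ s ∈ Finset.range (t + 1), R s ω) * R (t + 1) ω := by
              rw [show t + 2 = (t + 1) + 1 from rfl, Finset.prod_range_succ]
            rw [hZRt t htT ω, hprod]
            ring
        _ = ∫ ω in A, (fun ω => h ω * ∏ s ∈ Finset.range (t + 2), R s ω) ω
              * ZR (t + 1) ω ∂Q :=
            setintegral_mul_condexp (ℱ.le t) (hh.mul (hBm t (by omega) (t + 2) le_rfl)) hA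
        _ = ∫ ω in A, h ω * ((∏ s ∈ Finset.range (t + 2), R s ω) * ZR (t + 1) ω) ∂Q := by
            refine setIntegral_congr_fun (ℱ.le t _ hA) fun ω _ => by simp only; ring
        _ = ∫ ω in A, h ω * D ω ∂Q :=
            ih (t + 1) (by omega) h (hh.mono (ℱ.mono (Nat.le_succ t))) A
              (ℱ.mono (Nat.le_succ t) _ hA)
  -- positivity of ZR
  have hZRposAux : ∀ d t, t + d = T → ∀ ω, 0 < ZR t ω := by
    intro d
    induction d with
    | zero =>
      intro t ht ω
      have ht' : t = T := by omega
      subst ht'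
      rw [hZRT ω]
      exact mul_pos (div_pos one_pos (hBpos t le_rfl ω)) (hD ω)
    | succ d ih =>
      intro t ht ω
      rw [hZRt t (by omega) ω]
      exact mul_pos (hRpos (t + 1) (by omega) ω)
        (condexp_pos_full hQfull (ℱ.le t) (ih (t + 1) (by omega)) ω)
  have hZRpos : ∀ t ≤ T, ∀ ω, 0 < ZR t ω := fun t ht ω => hZRposAux (T - t) t (by omega) ω
  refine ⟨?_, ?_, ?_, ?_⟩
  · -- ZS is a Q-martingale
    intro t ht
    have hT1 : 0 < T := by omega
    have hZRtm : StronglyMeasurable[ℱ t] (ZR t) := by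
      have e : ZR t = fun ω => R (t + 1) ω * (Q[ZR (t + 1)|ℱ t]) ω := funext fun ω => hZRt t ht ω
      rw [e]
      exact (hRpred t).mul stronglyMeasurable_condExp
    have hZStm : StronglyMeasurable[ℱ t] (ZS t) := by
      have e : ZS t = fun ω => S t ω * ZR t ω := funext fun ω => hZS t ω
      rw [e]
      exact ((hSadapt t).mul hZRtm.measurable).stronglyMeasurable
    refine (ae_eq_condExp_of_forall_setIntegral_eq (ℱ.le t) Integrable.of_finite
      (fun s _ _ => Integrable.of_finite.integrableOn) (fun A hA _ => ?_)
      hZStm.aestronglyMeasurable).symm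
    have hAm0 : MeasurableSet A := ℱ.le t _ hA
    have hFt : StronglyMeasurable[ℱ t]
        (fun ω => S t ω / ∏ s ∈ Finset.range (t + 1), R s ω) :=
      ((hSadapt t).div (hBm t hT1 (t + 1) (by omega)).measurable).stronglyMeasurable
    have hFt1 : StronglyMeasurable[ℱ (t + 1)]
        (fun ω => S (t + 1) ω / ∏ s ∈ Finset.range (t + 2), R s ω) :=
      ((hSadapt (t + 1)).div
        (hBm (t + 1) hT1 (t + 2) (by omega)).measurable).stronglyMeasurable
    have e_t : ∫ ω in A, ZS t ω ∂Q
        = ∫ ω in A, (S t ω / ∏ s ∈ Finset.range (t + 1), R s ω) * D ω ∂Q := by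
      rw [← key (T - t) t (by omega) _ hFt A hA]
      refine setIntegral_congr_fun hAm0 fun ω _ => ?_
      rw [hZS t ω]
      have hB := (hBpos t (by omega) ω).ne'
      field_simp
    have e_t1 : ∫ ω in A, ZS (t + 1) ω ∂Q
        = ∫ ω in A, (S (t + 1) ω / ∏ s ∈ Finset.range (t + 2), R s ω) * D ω ∂Q := by
      rw [← key (T - (t + 1)) (t + 1) (by omega) _ hFt1 A (ℱ.mono (Nat.le_succ t) _ hA)]
      refine setIntegral_congr_fun hAm0 fun ω _ => ?_
      rw [hZS (t + 1) ω]
      have hB := (hBpos (t + 1) (by omega) ω).ne'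
      field_simp
    have eP : ∀ f : Ω → ℝ, ∫ ω in A, f ω * D ω ∂Q = ∫ ω in A, f ω ∂P := by
      intro f
      rw [hP, setintegral_density hD f hAm0]
    rw [e_t, e_t1, eP, eP]
    have h1 : ∫ ω in A, (S (t + 1) ω / ∏ s ∈ Finset.range (t + 2), R s ω) ∂P
        = ∫ ω in A, (P[fun ω => S (t + 1) ω / ∏ s ∈ Finset.range (t + 2), R s ω|ℱ t]) ω ∂P :=
      (setIntegral_condExp (ℱ.le t) Integrable.of_finite hA).symm
    rw [h1]
    exact (setIntegral_congr_ae hAm0 ((hmart t ht).mono fun ω hω _ => hω)).symm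
  · -- B ⬝ ZR is a Q-martingale
    intro t ht
    have hmul := condExp_mul_of_stronglyMeasurable_left (m := ℱ t) (μ := Q)
      (hBm t (by omega) (t + 2) le_rfl) (Integrable.of_finite (f := ((fun ω => ∏ s ∈ Finset.range (t + 2), R s ω) * ZR (t + 1)))) (Integrable.of_finite)
    have e1 : (fun ω => (∏ s ∈ Finset.range (t + 2), R s ω) * ZR (t + 1) ω)
        = (fun ω => ∏ s ∈ Finset.range (t + 2), R s ω) * ZR (t + 1) := rfl
    rw [e1]
    refine hmul.trans (ae_of_all _ fun ω => ?_)
    show (∏ s ∈ Finset.range (t + 2), R s ω) * (Q[ZR (t + 1)|ℱ t]) ω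
        = (∏ s ∈ Finset.range (t + 1), R s ω) * ZR t ω
    have hprod : ∏ s ∈ Finset.range (t + 2), R s ω
        = (∏ s ∈ Finset.range (t + 1), R s ω) * R (t + 1) ω := by
      rw [show t + 2 = (t + 1) + 1 from rfl, Finset.prod_range_succ]
    rw [hprod, hZRt t ht ω]
    ring
  · -- positivity
    intro t ht ω
    exact ⟨hZRpos t ht ω, by rw [hZS t ω]; exact mul_pos (hSpos t ht ω) (hZRpos t ht ω)⟩
  · -- bid-ask bounds
    intro t ht ω
    rw [hZS t ω, mul_div_cancel_right₀ _ (hZRpos t ht ω).ne']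
    exact hSbd t ht ω
end

section
/- If a self-financing strategy (α,β) with stock liquidation at time T (β_{T+1}=0, α_{T+1} = ϑ_T(ϱ_T(α_T), β_T)) satisfies ϑ_T(α_{T+1},β_{T+1}) ≥ 0 with strict inequality on a set of positive Q-probability, and (P,S,R) is an equivalent martingale triple, then E_P[(1/B_T) ϑ_T(α_{T+1},β_{T+1})] ≤ α_0. In particular α_0 > 0. -/
open MeasureTheory Finset

/-- For a self-financing strategy with stock liquidation at `T` whose terminal
liquidation value is nonnegative and positive with positive `Q`-probability, and an
equivalent martingale triple `(P,S,R)`, one has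
`E_P[(1/B_T) ϑ_T(α_{T+1},β_{T+1})] ≤ α_0`; in particular `α_0 > 0`. -/
theorem arbitrage_profit_bound
    {Ω : Type*} [Fintype Ω] [Nonempty Ω] {m0 : MeasurableSpace Ω}
    [MeasurableSingletonClass Ω]
    (ℱ : Filtration ℕ m0) (T : ℕ) (hℱ0 : (ℱ 0 : MeasurableSpace Ω) = ⊥)
    (Q P : Measure Ω) [IsProbabilityMeasure Q] [IsProbabilityMeasure P]
    (hQfull : ∀ ω, 0 < Q {ω}) (hPQ : P ≪ Q) (hQP : Q ≪ P)
    (Sb Sa S Rd Rc R : ℕ → Ω → ℝ)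
    (hSb : ∀ t ω, 0 < Sb t ω) (hba : ∀ t ω, Sb t ω ≤ Sa t ω)
    (hRd : ∀ t ω, 0 < Rd t ω) (hdc : ∀ t ω, Rd t ω ≤ Rc t ω)
    (hSadapt : Adapted ℱ S)
    (hRpred : ∀ t, StronglyMeasurable[ℱ t] (R (t + 1)))
    (hSbd : ∀ t ω, Sb t ω ≤ S t ω ∧ S t ω ≤ Sa t ω)
    (hRbd : ∀ t ω, Rd t ω ≤ R t ω ∧ R t ω ≤ Rc t ω)
    (hmart : Martingale
      (fun t ω => S t ω / ∏ s ∈ Finset.range (t + 1), R s ω) ℱ P)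
    (α β : ℕ → Ω → ℝ)
    (hβ0 : β 0 = 0) (hβT1 : β (T + 1) = 0)
    (hα0m : StronglyMeasurable[ℱ 0] (α 0))
    (hpred : ∀ t ≤ T, StronglyMeasurable[ℱ t] (α (t + 1)) ∧
      StronglyMeasurable[ℱ t] (β (t + 1)))
    -- self-financing (wedge form)
    (hsf : ∀ t ≤ T, ∀ ω, ∀ x ∈ Set.Icc (Sb t ω) (Sa t ω),
      ∀ r ∈ Set.Icc (Rd t ω) (Rc t ω),
      α (t + 1) ω + β (t + 1) ω * x ≤ α t ω * r + β t ω * x)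
    -- liquidation: α_{T+1} = ϑ_T(ϱ_T(α_T), β_T)
    (hliq : ∀ ω, α (T + 1) ω =
      (max (α T ω) 0 * Rd T ω - max (-(α T ω)) 0 * Rc T ω)
        + max (β T ω) 0 * Sb T ω - max (-(β T ω)) 0 * Sa T ω)
    (hnn : ∀ ω, 0 ≤ α (T + 1) ω + max (β (T + 1) ω) 0 * Sb T ω
      - max (-(β (T + 1) ω)) 0 * Sa T ω)
    (hpos : 0 < Q {ω | 0 < α (T + 1) ω + max (β (T + 1) ω) 0 * Sb T ω
      - max (-(β (T + 1) ω)) 0 * Sa T ω}) :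
    ∀ ω₀,
      (∫ ω, (1 / ∏ s ∈ Finset.range (T + 1), R s ω) *
          (α (T + 1) ω + max (β (T + 1) ω) 0 * Sb T ω
            - max (-(β (T + 1) ω)) 0 * Sa T ω) ∂P) ≤ α 0 ω₀ ∧
      0 < α 0 ω₀ := by
  intro ω₀
  classical
  have hRpos : ∀ t ω, 0 < R t ω := fun t ω => lt_of_lt_of_le (hRd t ω) (hRbd t ω).1
  set B : ℕ → Ω → ℝ := fun t ω => ∏ s ∈ Finset.range (t + 1), R s ω with hB
  have hBpos : ∀ t ω, 0 < B t ω := fun t ω => Finset.prod_pos fun s _ => hRpos s ω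
  set M : ℕ → Ω → ℝ := fun t ω => S t ω / B t ω with hM
  set Y : ℕ → Ω → ℝ := fun t ω => α (t + 1) ω / B t ω + β (t + 1) ω * M t ω with hY
  have hInt : ∀ f : Ω → ℝ, Integrable f P := fun f => Integrable.of_finite
  -- α 0 is constant
  have hconst : ∀ ω, α 0 ω = α 0 ω₀ := by
    intro ω
    have hmeas : MeasurableSet[ℱ 0] (α 0 ⁻¹' {α 0 ω₀}) :=
      hα0m.measurable (measurableSet_singleton _)
    rw [hℱ0] at hmeas
    rcases MeasurableSpace.measurableSet_bot_iff.mp hmeas with h | h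
    · exfalso
      have hx : ω₀ ∈ α 0 ⁻¹' {α 0 ω₀} := rfl
      rw [h] at hx
      exact hx
    · have : ω ∈ α 0 ⁻¹' {α 0 ω₀} := h.symm ▸ Set.mem_univ ω
      exact this
  -- martingale transform step
  have key : ∀ t, t ≤ T →
      ∫ ω, β (t + 1) ω * M (t + 1) ω ∂P = ∫ ω, β (t + 1) ω * M t ω ∂P := by
    intro t ht
    have hmul : P[(β (t + 1)) * (M (t + 1)) | ℱ t] =ᵐ[P] (β (t + 1)) * P[M (t + 1) | ℱ t] :=
      condExp_mul_of_stronglyMeasurable_left (hpred t ht).2 (hInt _) (hInt _)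
    have hce : P[M (t + 1) | ℱ t] =ᵐ[P] M t := hmart.condExp_ae_eq (Nat.le_succ t)
    calc ∫ ω, β (t + 1) ω * M (t + 1) ω ∂P
        = ∫ ω, ((β (t + 1)) * (M (t + 1))) ω ∂P := rfl
      _ = ∫ ω, (P[(β (t + 1)) * (M (t + 1)) | ℱ t]) ω ∂P :=
          (integral_condExp (ℱ.le t)).symm
      _ = ∫ ω, ((β (t + 1)) * P[M (t + 1) | ℱ t]) ω ∂P := integral_congr_ae hmul
      _ = ∫ ω, β (t + 1) ω * M t ω ∂P := by
          refine integral_congr_ae (hce.mono fun ω hω => ?_)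
          simp only [Pi.mul_apply, hω]
  -- one-step supermartingale inequality
  have step : ∀ t, t + 1 ≤ T → ∫ ω, Y (t + 1) ω ∂P ≤ ∫ ω, Y t ω ∂P := by
    intro t ht
    have hpt : ∀ ω, Y (t + 1) ω ≤ α (t + 1) ω / B t ω + β (t + 1) ω * M (t + 1) ω := by
      intro ω
      have hs := hsf (t + 1) ht ω (S (t + 1) ω)
        ⟨(hSbd _ ω).1, (hSbd _ ω).2⟩ (R (t + 1) ω) ⟨(hRbd _ ω).1, (hRbd _ ω).2⟩
      have hBsucc : B (t + 1) ω = B t ω * R (t + 1) ω := by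
        simp [hB, Finset.prod_range_succ]
      have hBp := hBpos (t + 1) ω
      have hBt := hBpos t ω
      have hRp := hRpos (t + 1) ω
      have e1 : Y (t + 1) ω = (α (t + 2) ω + β (t + 2) ω * S (t + 1) ω) / B (t + 1) ω := by
        simp only [hY, hM]
        field_simp
      have e2 : α (t + 1) ω / B t ω + β (t + 1) ω * M (t + 1) ω
          = (α (t + 1) ω * R (t + 1) ω + β (t + 1) ω * S (t + 1) ω) / B (t + 1) ω := by
        simp only [hM]
        rw [hBsucc]
        field_simp
      rw [e1, e2]
      gcongr
    calc ∫ ω, Y (t + 1) ω ∂P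
        ≤ ∫ ω, (α (t + 1) ω / B t ω + β (t + 1) ω * M (t + 1) ω) ∂P :=
          integral_mono (hInt _) (hInt _) hpt
      _ = (∫ ω, α (t + 1) ω / B t ω ∂P) + ∫ ω, β (t + 1) ω * M (t + 1) ω ∂P :=
          integral_add (hInt _) (hInt _)
      _ = (∫ ω, α (t + 1) ω / B t ω ∂P) + ∫ ω, β (t + 1) ω * M t ω ∂P := by
          rw [key t (Nat.le_of_succ_le ht)]
      _ = ∫ ω, Y t ω ∂P := (integral_add (hInt _) (hInt _)).symm
  -- base case
  have base : ∫ ω, Y 0 ω ∂P ≤ α 0 ω₀ := by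
    have hpt : ∀ ω, Y 0 ω ≤ α 0 ω := by
      intro ω
      have hs := hsf 0 (Nat.zero_le T) ω (S 0 ω)
        ⟨(hSbd _ ω).1, (hSbd _ ω).2⟩ (R 0 ω) ⟨(hRbd _ ω).1, (hRbd _ ω).2⟩
      rw [hβ0] at hs
      simp only [Pi.zero_apply, zero_mul, add_zero] at hs
      have hB0 : B 0 ω = R 0 ω := by simp [hB]
      have hRp := hRpos 0 ω
      have e1 : Y 0 ω = (α 1 ω + β 1 ω * S 0 ω) / B 0 ω := by
        simp only [hY, hM]
        field_simp
      rw [e1, hB0, div_le_iff₀ hRp]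
      calc α 1 ω + β 1 ω * S 0 ω ≤ α 0 ω * R 0 ω := hs
        _ = α 0 ω * R 0 ω := rfl
    calc ∫ ω, Y 0 ω ∂P ≤ ∫ ω, α 0 ω ∂P := integral_mono (hInt _) (hInt _) hpt
      _ = ∫ _ω, α 0 ω₀ ∂P := integral_congr_ae (Filter.Eventually.of_forall hconst)
      _ = α 0 ω₀ := by simp
  -- main induction
  have main : ∀ t, t ≤ T → ∫ ω, Y t ω ∂P ≤ α 0 ω₀ := by
    intro t
    induction t with
    | zero => intro _; exact base
    | succ n ih =>
        intro h
        exact le_trans (step n h) (ih (Nat.le_of_succ_le h))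
  -- identify the goal integrand with Y T
  have hYT : ∀ ω, (1 / ∏ s ∈ Finset.range (T + 1), R s ω) *
      (α (T + 1) ω + max (β (T + 1) ω) 0 * Sb T ω
        - max (-(β (T + 1) ω)) 0 * Sa T ω) = Y T ω := by
    intro ω
    simp only [hY, hM, hβT1, hB, Pi.zero_apply, neg_zero, max_self, zero_mul, add_zero,
      sub_zero]
    ring
  have hineq : (∫ ω, (1 / ∏ s ∈ Finset.range (T + 1), R s ω) *
      (α (T + 1) ω + max (β (T + 1) ω) 0 * Sb T ω
        - max (-(β (T + 1) ω)) 0 * Sa T ω) ∂P) ≤ α 0 ω₀ := by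
    calc _ = ∫ ω, Y T ω ∂P := integral_congr_ae (Filter.Eventually.of_forall hYT)
      _ ≤ α 0 ω₀ := main T le_rfl
  refine ⟨hineq, ?_⟩
  -- strict positivity
  have hPsupp : ∀ ω, 0 < P {ω} :=
    fun ω => pos_iff_ne_zero.mpr fun h0 => (hQfull ω).ne' (hQP h0)
  have hαnn : ∀ ω, 0 ≤ α (T + 1) ω := by
    intro ω
    have := hnn ω
    rw [hβT1] at this
    simpa using this
  have hAne : {ω | 0 < α (T + 1) ω + max (β (T + 1) ω) 0 * Sb T ω
      - max (-(β (T + 1) ω)) 0 * Sa T ω}.Nonempty :=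
    nonempty_of_measure_ne_zero hpos.ne'
  obtain ⟨ω₁, hω₁⟩ := hAne
  have hαpos : 0 < α (T + 1) ω₁ := by
    have : 0 < α (T + 1) ω₁ + max (β (T + 1) ω₁) 0 * Sb T ω₁
        - max (-(β (T + 1) ω₁)) 0 * Sa T ω₁ := hω₁
    rw [hβT1] at this
    simpa using this
  have hYnn : ∀ ω, 0 ≤ Y T ω := by
    intro ω
    simp only [hY, hM]
    rw [hβT1]
    simp only [Pi.zero_apply, zero_mul, add_zero]
    exact div_nonneg (hαnn ω) (hBpos T ω).le
  have hYpos : 0 < Y T ω₁ := by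
    simp only [hY, hM]
    rw [hβT1]
    simp only [Pi.zero_apply, zero_mul, add_zero]
    exact div_pos hαpos (hBpos T ω₁)
  have hintpos : 0 < ∫ ω, Y T ω ∂P := by
    rw [integral_fintype (hInt _)]
    refine Finset.sum_pos' (fun ω _ => ?_) ⟨ω₁, Finset.mem_univ _, ?_⟩
    · exact smul_nonneg ENNReal.toReal_nonneg (hYnn ω)
    · have h1 : 0 < (P {ω₁}).toReal :=
        ENNReal.toReal_pos (hPsupp ω₁).ne' (measure_ne_top P _)
      exact smul_pos h1 hYpos
  calc (0:ℝ) < ∫ ω, Y T ω ∂P := hintpos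
    _ ≤ α 0 ω₀ := main T le_rfl
end

section
/- Let A ⊂ ℝ^n be a polyhedral convex cone and L⁺ the convex hull of the standard basis vectors of ℝ^n. If A ∩ L⁺ = ∅, then there exists a vector w ∈ ℝ^n with all coordinates strictly positive such that w · a ≤ 0 for all a ∈ A. -/
/-- Separation of a polyhedral convex cone `A` from the convex hull `L⁺` of the
standard basis vectors: if `A ∩ L⁺ = ∅`, then there is a strictly positive vector `w`
with `w · a ≤ 0` for all `a ∈ A`. -/
theorem polyhedral_cone_separation (n : ℕ) (A : Set (Fin n → ℝ))
    (hA : ∃ (k : ℕ) (f : Fin k → (Fin n → ℝ) →ₗ[ℝ] ℝ),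
      A = {x | ∀ i, 0 ≤ f i x})
    (hdisj : A ∩ convexHull ℝ (Set.range fun i : Fin n => Pi.single i (1 : ℝ)) = ∅) :
    ∃ w : Fin n → ℝ, (∀ i, 0 < w i) ∧ ∀ a ∈ A, ∑ i, w i * a i ≤ 0 := by
  obtain ⟨k, f, rfl⟩ := hA
  set A : Set (Fin n → ℝ) := {x | ∀ i, 0 ≤ f i x} with hAdef
  -- A is closed
  have hclosed : IsClosed A := by
    have : A = ⋂ i, (f i) ⁻¹' Set.Ici 0 := by
      ext x; simp [hAdef]
    rw [this]
    exact isClosed_iInter fun i =>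
      (isClosed_Ici).preimage (f i).continuous_of_finiteDimensional
  -- A is convex
  have hconv : Convex ℝ A := by
    intro x hx y hy a b ha hb hab i
    have := hx i; have := hy i
    simp only [map_add, map_smul, smul_eq_mul]
    positivity
  -- the convex hull is compact and convex
  have hfin : (Set.range fun i : Fin n => Pi.single i (1 : ℝ)).Finite :=
    Set.finite_range _
  have hcpt : IsCompact (convexHull ℝ (Set.range fun i : Fin n => Pi.single i (1 : ℝ))) :=
    hfin.isCompact_convexHull (𝕜 := ℝ)
  obtain ⟨g, u, v, hs, huv, ht⟩ :=
    geometric_hahn_banach_closed_compact hconv hclosed (convex_convexHull ℝ _) hcpt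
      (Set.disjoint_iff_inter_eq_empty.mpr hdisj)
  have h0 : (0 : Fin n → ℝ) ∈ A := fun i => by simp
  have hu0 : 0 < u := by have := hs 0 h0; simpa using this
  -- g is nonpositive on A
  have hgle : ∀ a ∈ A, g a ≤ 0 := by
    intro a ha
    by_contra hpos
    push_neg at hpos
    obtain ⟨t, ht'⟩ := exists_nat_gt (u / g a)
    have hta : ((t : ℝ)) • a ∈ A := fun i => by
      have := ha i
      simp only [map_smul, smul_eq_mul]
      positivity
    have := hs _ hta
    rw [map_smul, smul_eq_mul] at this
    have : u / g a < (t : ℝ) := ht'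
    nlinarith [div_lt_iff₀ hpos |>.mp this]
  refine ⟨fun i => g (Pi.single i 1), fun i => ?_, fun a ha => ?_⟩
  · have hi : (Pi.single i (1 : ℝ)) ∈
        convexHull ℝ (Set.range fun i : Fin n => Pi.single i (1 : ℝ)) :=
      subset_convexHull ℝ _ ⟨i, rfl⟩
    have := ht _ hi
    linarith
  · have hrepr : a = ∑ i, a i • (Pi.single i (1 : ℝ) : Fin n → ℝ) := by
      ext j; simp [Pi.single_apply, Finset.sum_apply, mul_comm]
    have : g a = ∑ i, a i * g (Pi.single i 1) := by
      conv_lhs => rw [hrepr]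
      simp [map_sum]
    have hga := hgle a ha
    rw [this] at hga
    calc ∑ i, g (Pi.single i 1) * a i = ∑ i, a i * g (Pi.single i 1) := by
          simp [mul_comm]
      _ ≤ 0 := hga
end

section
/- If Z^S is a strictly positive Q-martingale and B Z^R is a strictly positive Q-martingale (B predictable, positive), then under the measure P defined by dP/dQ = B_T Z^R_T / E_Q[B_T Z^R_T], the process S_t := Z^S_t / Z^R_t satisfies E_P[S_{t+1} | F_t] = R_{t+1} S_t for all t < T, where R_{t+1} = B_{t+1}/B_t. -/
open MeasureTheory Finset

/-- If `Z^S` and `B Z^R` are strictly positive `Q`-martingales, then under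
`dP/dQ = B_T Z^R_T / E_Q[B_T Z^R_T]` the process `S_t = Z^S_t / Z^R_t` satisfies
`E_P[S_{t+1}|F_t] = R_{t+1} S_t` for `t < T`. -/
theorem change_of_measure_martingale
    {Ω : Type*} [Fintype Ω] [Nonempty Ω] {m0 : MeasurableSpace Ω}
    [MeasurableSingletonClass Ω]
    (ℱ : Filtration ℕ m0) (T : ℕ) (hℱ0 : (ℱ 0 : MeasurableSpace Ω) = ⊥)
    (Q : Measure Ω) [IsProbabilityMeasure Q] (hQfull : ∀ ω, 0 < Q {ω})
    (ZR ZS R : ℕ → Ω → ℝ)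
    (hZRadapt : Adapted ℱ ZR) (hZSadapt : Adapted ℱ ZS)
    (hZpos : ∀ t ω, 0 < ZR t ω ∧ 0 < ZS t ω)
    (hR0 : StronglyMeasurable[ℱ 0] (R 0))
    (hRpred : ∀ t, StronglyMeasurable[ℱ t] (R (t + 1)))
    (hRpos : ∀ t ω, 0 < R t ω)
    (hZSmart : ∀ t < T, Q[ZS (t + 1)|ℱ t] =ᵐ[Q] ZS t)
    (hBZRmart : ∀ t < T,
      Q[fun ω => (∏ s ∈ Finset.range (t + 2), R s ω) * ZR (t + 1) ω|ℱ t]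
        =ᵐ[Q] fun ω => (∏ s ∈ Finset.range (t + 1), R s ω) * ZR t ω)
    -- normalisation E_Q[B_T Z^R_T] = B_0 Z^R_0
    (hnorm : ∀ ω, (∫ ω', (∏ s ∈ Finset.range (T + 1), R s ω') * ZR T ω' ∂Q)
      = R 0 ω * ZR 0 ω) :
    ∀ P : Measure Ω,
      P = (Q.withDensity fun ω =>
        ENNReal.ofReal (((∏ s ∈ Finset.range (T + 1), R s ω) * ZR T ω) /
          ∫ ω', (∏ s ∈ Finset.range (T + 1), R s ω') * ZR T ω' ∂Q)) →
      ∀ t < T,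
        P[fun ω => ZS (t + 1) ω / ZR (t + 1) ω|ℱ t]
          =ᵐ[P] fun ω => R (t + 1) ω * (ZS t ω / ZR t ω) := by
  -- basic facts on the finite space
  have intQ : ∀ f : Ω → ℝ, Integrable f Q := fun f => .of_finite
  have aeQ : ∀ {p : Ω → Prop}, (∀ᵐ ω ∂Q, p ω) → ∀ ω, p ω := by
    intro p h ω
    by_contra hc
    rw [ae_iff] at h
    exact absurd (measure_mono_null (fun x hx => by
      rcases hx with rfl; exact hc) h) (hQfull ω).ne'
  -- notation
  set gT : Ω → ℝ := fun ω => (∏ s ∈ Finset.range (T + 1), R s ω) * ZR T ω with hgT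
  set c : ℝ := ∫ ω', gT ω' ∂Q with hc
  obtain ⟨ω₀⟩ := (inferInstance : Nonempty Ω)
  have hcpos : 0 < c := by
    rw [hnorm ω₀]
    exact mul_pos (hRpos 0 ω₀) (hZpos 0 ω₀).1
  -- measurability of products of R
  have hprodR : ∀ n t', n ≤ t' + 2 →
      StronglyMeasurable[ℱ t'] fun ω => ∏ s ∈ Finset.range n, R s ω := by
    intro n
    induction n with
    | zero => intro t' _; simpa using stronglyMeasurable_const
    | succ m ih =>
        intro t' h
        have h1 : StronglyMeasurable[ℱ t'] (R m) := by
          cases m with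
          | zero => exact hR0.mono (ℱ.mono (Nat.zero_le _))
          | succ u => exact (hRpred u).mono (ℱ.mono (by omega))
        simpa [Finset.prod_range_succ, Pi.mul_def] using (ih t' (by omega)).mul h1
  -- tower property : E_Q[B_T Z^R_T | ℱ k] = B_k Z^R_k for k ≤ T
  have tower : ∀ j k, k + j = T →
      ∀ ω, (Q[gT|ℱ k]) ω = (∏ s ∈ Finset.range (k + 1), R s ω) * ZR k ω := by
    intro j
    induction j with
    | zero =>
        intro k hk ω
        have hk' : k = T := by omega
        subst hk'
        have hsm : StronglyMeasurable[ℱ k] gT :=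
          (hprodR (k + 1) k (by omega)).mul (hZRadapt k).stronglyMeasurable
        rw [condExp_of_stronglyMeasurable (ℱ.le k) hsm (intQ gT)]
    | succ m ih =>
        intro k hk ω
        have h1 : Q[Q[gT|ℱ (k + 1)]|ℱ k] =ᵐ[Q] Q[gT|ℱ k] :=
          condExp_condExp_of_le (ℱ.mono (Nat.le_succ k)) (ℱ.le (k + 1))
        have h2 : (Q[gT|ℱ (k + 1)]) =
            fun ω => (∏ s ∈ Finset.range (k + 2), R s ω) * ZR (k + 1) ω :=
          funext (ih (k + 1) (by omega))
        have h3 := hBZRmart k (by omega)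
        rw [h2] at h1
        have := aeQ (h1.symm.trans h3)
        exact this ω
  -- pull-out property for set integrals
  have pull : ∀ (k : ℕ) (φ X : Ω → ℝ), StronglyMeasurable[ℱ k] φ →
      ∀ s : Set Ω, MeasurableSet[ℱ k] s →
      ∫ x in s, φ x * X x ∂Q = ∫ x in s, φ x * (Q[X|ℱ k]) x ∂Q := by
    intro k φ X hφ s hs
    have h1 := setIntegral_condExp (ℱ.le k) (intQ (φ * X)) hs
    have h2 : Q[φ * X|ℱ k] = φ * Q[X|ℱ k] :=
      funext (aeQ (condExp_mul_of_stronglyMeasurable_left hφ (intQ _) (intQ X)))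
    rw [h2] at h1
    simpa [Pi.mul_apply] using h1.symm
  -- now the main statement
  intro P hP t ht
  subst hP
  set P : Measure Ω := Q.withDensity fun ω => ENNReal.ofReal (gT ω / c) with hPdef
  haveI : IsFiniteMeasure P := isFiniteMeasure_withDensity_ofReal (intQ fun ω => gT ω / c).2
  -- conversion of set integrals from P to Q
  have hdnn : ∀ ω, 0 ≤ gT ω / c := fun ω =>
    div_nonneg (mul_nonneg (Finset.prod_nonneg fun i _ => (hRpos i ω).le)
      (hZpos T ω).1.le) hcpos.le
  have hconv : ∀ (f : Ω → ℝ) (s : Set Ω),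
      ∫ x in s, f x ∂P = ∫ x in s, (gT x / c) * f x ∂Q := by
    intro f s
    have hden : (fun ω => ENNReal.ofReal (gT ω / c)) =
        fun ω => (((gT ω / c).toNNReal : NNReal) : ENNReal) := rfl
    rw [hPdef, hden,
      setIntegral_withDensity_eq_setIntegral_smul
        (measurable_of_countable fun ω => (gT ω / c).toNNReal) f
        (Set.toFinite s).measurableSet]
    apply setIntegral_congr_fun (Set.toFinite s).measurableSet
    intro x _
    simp [NNReal.smul_def, Real.coe_toNNReal _ (hdnn x)]
  set f : Ω → ℝ := fun ω => ZS (t + 1) ω / ZR (t + 1) ω with hf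
  set h : Ω → ℝ := fun ω => R (t + 1) ω * (ZS t ω / ZR t ω) with hh
  have smdiv : ∀ (m : MeasurableSpace Ω) (u v : Ω → ℝ), StronglyMeasurable[m] u →
      StronglyMeasurable[m] v → StronglyMeasurable[m] fun ω => u ω / v ω :=
    fun m u v hu hv => (hu.measurable.div hv.measurable).stronglyMeasurable
  have hhSM : StronglyMeasurable[ℱ t] h :=
    (hRpred t).mul (smdiv _ _ _ (hZSadapt t).stronglyMeasurable (hZRadapt t).stronglyMeasurable)
  refine (ae_eq_condExp_of_forall_setIntegral_eq (ℱ.le t) (.of_finite)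
    (fun s _ _ => Integrable.integrableOn (.of_finite)) (fun s hs _ => ?_)
    (hhSM.aestronglyMeasurable)).symm
  -- set integral equality : ∫_s h dP = ∫_s f dP
  rw [hconv h s, hconv f s]
  have e1 : ∀ x, (gT x / c) * h x = c⁻¹ * (h x * gT x) := by
    intro x; ring
  have e2 : ∀ x, (gT x / c) * f x = c⁻¹ * (f x * gT x) := by
    intro x; ring
  simp only [e1, e2, integral_const_mul]
  congr 1
  -- reduce to an equality of Q-set-integrals
  have key1 : ∫ x in s, h x * gT x ∂Q
      = ∫ x in s, (∏ u ∈ Finset.range (t + 2), R u x) * ZS t x ∂Q := by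
    rw [pull t h gT hhSM s hs]
    apply setIntegral_congr_fun ((ℱ.le t) s hs)
    intro x _
    dsimp only
    rw [tower (T - t) t (by omega) x]
    have hZRne : ZR t x ≠ 0 := (hZpos t x).1.ne'
    simp only [hh, Finset.prod_range_succ]
    field_simp
  have key2 : ∫ x in s, f x * gT x ∂Q
      = ∫ x in s, (∏ u ∈ Finset.range (t + 2), R u x) * ZS t x ∂Q := by
    have hs' : MeasurableSet[ℱ (t + 1)] s := ℱ.mono (Nat.le_succ t) _ hs
    have hfSM : StronglyMeasurable[ℱ (t + 1)] f :=
      smdiv _ _ _ (hZSadapt (t + 1)).stronglyMeasurable (hZRadapt (t + 1)).stronglyMeasurable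
    rw [pull (t + 1) f gT hfSM s hs']
    have step1 : ∫ x in s, f x * (Q[gT|ℱ (t + 1)]) x ∂Q
        = ∫ x in s, (∏ u ∈ Finset.range (t + 2), R u x) * ZS (t + 1) x ∂Q := by
      apply setIntegral_congr_fun ((ℱ.le t) s hs)
      intro x _
      dsimp only
      rw [tower (T - (t + 1)) (t + 1) (by omega) x]
      have hZRne : ZR (t + 1) x ≠ 0 := (hZpos (t + 1) x).1.ne'
      simp only [hf]
      field_simp
    rw [step1, pull t (fun ω => ∏ u ∈ Finset.range (t + 2), R u ω) (ZS (t + 1))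
      (hprodR (t + 2) t le_rfl) s hs]
    have hZScond : Q[ZS (t + 1)|ℱ t] = ZS t := funext (aeQ (hZSmart t ht))
    rw [hZScond]
  rw [key1, key2]
end

section
/- In a one-period model (T = 1) with deterministic initial bid/ask prices S^b_0 ≤ S^a_0, rates R^d_1 ≤ R^c_1, and finitely many terminal states, there is no arbitrage if and only if there exist R ∈ [R^d_1, R^c_1], S_0 ∈ [S^b_0, S^a_0] and a probability vector p with all entries positive such that Σ_ω p(ω) S_1(ω) = R S_0 for some choice of F_1-measurable S_1 with S^b_1 ≤ S_1 ≤ S^a_1. -/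
open Finset

lemma ftap_bal {Ω : Type*} [Fintype Ω] [Nonempty Ω] (v : Ω → ℝ) (x : ℝ)
    (h : (∀ ω, v ω = x) ∨ ((∃ ω, v ω < x) ∧ (∃ ω, x < v ω))) :
    ∃ p : Ω → ℝ, (∀ ω, 0 < p ω) ∧ (∑ ω, p ω) = 1 ∧ (∑ ω, p ω * v ω) = x := by
  rcases h with h | ⟨⟨ω1, hω1⟩, ⟨ω2, hω2⟩⟩
  · refine ⟨fun _ => ((Fintype.card Ω : ℝ))⁻¹, fun ω => by positivity, ?_, ?_⟩
    · simp [Finset.card_univ]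
    · have : ∀ ω : Ω, ((Fintype.card Ω : ℝ))⁻¹ * v ω = ((Fintype.card Ω : ℝ))⁻¹ * x := by
        intro ω; rw [h ω]
      rw [Finset.sum_congr rfl fun ω _ => this ω, Finset.sum_const, Finset.card_univ,
        nsmul_eq_mul]
      field_simp
  · set A : ℝ := ∑ ω, (max (x - v ω) 0)^2 with hA
    set B : ℝ := ∑ ω, (max (v ω - x) 0)^2 with hB
    have hApos : 0 < A := by
      apply Finset.sum_pos' (fun ω _ => by positivity) ⟨ω1, Finset.mem_univ _, by
        have : 0 < x - v ω1 := by linarith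
        have hm : max (x - v ω1) 0 = x - v ω1 := max_eq_left this.le
        rw [hm]; positivity⟩
    have hBpos : 0 < B := by
      apply Finset.sum_pos' (fun ω _ => by positivity) ⟨ω2, Finset.mem_univ _, by
        have : 0 < v ω2 - x := by linarith
        have hm : max (v ω2 - x) 0 = v ω2 - x := max_eq_left this.le
        rw [hm]; positivity⟩
    set w : Ω → ℝ := fun ω =>
      B * max (x - v ω) 0 + A * max (v ω - x) 0 + (if v ω = x then 1 else 0) with hw
    have hwpos : ∀ ω, 0 < w ω := by
      intro ω
      rcases lt_trichotomy (v ω) x with hlt | heq | hgt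
      · have h1 : 0 < B * max (x - v ω) 0 := by
          apply mul_pos hBpos; rw [max_eq_left (by linarith : (0:ℝ) ≤ x - v ω)]; linarith
        have h2 : 0 ≤ A * max (v ω - x) 0 := by positivity
        have h3 : (0:ℝ) ≤ (if v ω = x then 1 else 0) := by positivity
        simp only [hw]; linarith
      · simp only [hw, heq]; norm_num
      · have h1 : 0 < A * max (v ω - x) 0 := by
          apply mul_pos hApos; rw [max_eq_left (by linarith : (0:ℝ) ≤ v ω - x)]; linarith
        have h2 : 0 ≤ B * max (x - v ω) 0 := by positivity
        have h3 : (0:ℝ) ≤ (if v ω = x then 1 else 0) := by positivity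
        simp only [hw]; linarith
    have hkey : ∀ ω, w ω * (v ω - x) = A * (max (v ω - x) 0)^2 - B * (max (x - v ω) 0)^2 := by
      intro ω
      rcases lt_trichotomy (v ω) x with hlt | heq | hgt
      · rw [hw]; simp only
        rw [if_neg hlt.ne, max_eq_left (by linarith : (0:ℝ) ≤ x - v ω),
          max_eq_right (by linarith : v ω - x ≤ 0)]
        ring
      · rw [hw]; simp only [heq]; simp
      · rw [hw]; simp only
        rw [if_neg hgt.ne', max_eq_left (by linarith : (0:ℝ) ≤ v ω - x),
          max_eq_right (by linarith : x - v ω ≤ 0)]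
        ring
    have hzero : ∑ ω, w ω * (v ω - x) = 0 := by
      rw [Finset.sum_congr rfl fun ω _ => hkey ω, Finset.sum_sub_distrib,
        ← Finset.mul_sum, ← Finset.mul_sum, ← hA, ← hB]
      ring
    set W : ℝ := ∑ ω, w ω with hW
    have hWpos : 0 < W := Finset.sum_pos (fun ω _ => hwpos ω) Finset.univ_nonempty
    refine ⟨fun ω => w ω / W, fun ω => div_pos (hwpos ω) hWpos, ?_, ?_⟩
    · rw [← Finset.sum_div]; field_simp; exact hW.symm
    · have h1 : ∑ ω, w ω * v ω = x * W := by
        have := hzero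
        have h2 : ∑ ω, w ω * (v ω - x) = (∑ ω, w ω * v ω) - x * W := by
          rw [hW, Finset.mul_sum, ← Finset.sum_sub_distrib]
          apply Finset.sum_congr rfl; intro ω _; ring
        linarith [h2 ▸ this]
      have : ∀ ω : Ω, w ω / W * v ω = (w ω * v ω) / W := fun ω => by ring
      rw [Finset.sum_congr rfl fun ω _ => this ω, ← Finset.sum_div, h1]
      field_simp


lemma ftap_S1 {Ω : Type*} [Fintype Ω] [Nonempty Ω] (Sb1 Sa1 : Ω → ℝ)
    (hba1 : ∀ ω, Sb1 ω ≤ Sa1 ω) (x : ℝ)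
    (h1 : ∃ ω, Sb1 ω < x) (h2 : ∃ ω, x < Sa1 ω) :
    ∃ S1 : Ω → ℝ, (∀ ω, Sb1 ω ≤ S1 ω ∧ S1 ω ≤ Sa1 ω) ∧
      ((∀ ω, S1 ω = x) ∨ ((∃ ω, S1 ω < x) ∧ (∃ ω, x < S1 ω))) := by
  classical
  set c : Ω → ℝ := fun ω => max (Sb1 ω) (min x (Sa1 ω)) with hc
  have hcb : ∀ ω, Sb1 ω ≤ c ω := fun ω => le_max_left _ _
  have hca : ∀ ω, c ω ≤ Sa1 ω := fun ω => max_le (hba1 ω) (min_le_right _ _)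
  by_cases hc1 : ∃ ω, c ω < x <;> by_cases hc2 : ∃ ω, x < c ω
  · exact ⟨c, fun ω => ⟨hcb ω, hca ω⟩, Or.inr ⟨hc1, hc2⟩⟩
  · -- all c ≤ x, some c < x : bump the max of Sa1 witness up
    push_neg at hc2
    obtain ⟨ωp, hωp⟩ := h2
    have hcp : c ωp = x := by
      have h3 : x ≤ c ωp := by
        rw [hc]; simp only
        exact le_max_of_le_right (le_min le_rfl hωp.le)
      exact le_antisymm (hc2 ωp) h3
    refine ⟨Function.update c ωp (Sa1 ωp), ?_, Or.inr ⟨?_, ?_⟩⟩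
    · intro ω
      by_cases hω : ω = ωp
      · subst hω; rw [Function.update_self]; exact ⟨hba1 ω, le_rfl⟩
      · rw [Function.update_of_ne hω]; exact ⟨hcb ω, hca ω⟩
    · obtain ⟨ω1, hω1⟩ := hc1
      have hne : ω1 ≠ ωp := by intro h; rw [h, hcp] at hω1; exact lt_irrefl _ hω1
      exact ⟨ω1, by rwa [Function.update_of_ne hne]⟩
    · exact ⟨ωp, by rwa [Function.update_self]⟩
  · -- all c ≥ x, some c > x : bump min of Sb1 witness down
    push_neg at hc1
    obtain ⟨ωm, hωm⟩ := h1
    have hcm : c ωm = x := by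
      have h3 : c ωm ≤ x := by
        rw [hc]; simp only
        exact max_le hωm.le (min_le_left _ _)
      exact le_antisymm h3 (hc1 ωm)
    refine ⟨Function.update c ωm (Sb1 ωm), ?_, Or.inr ⟨?_, ?_⟩⟩
    · intro ω
      by_cases hω : ω = ωm
      · subst hω; rw [Function.update_self]; exact ⟨le_rfl, hba1 ω⟩
      · rw [Function.update_of_ne hω]; exact ⟨hcb ω, hca ω⟩
    · exact ⟨ωm, by rwa [Function.update_self]⟩
    · obtain ⟨ω2, hω2⟩ := hc2
      have hne : ω2 ≠ ωm := by intro h; rw [h, hcm] at hω2; exact lt_irrefl _ hω2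
      exact ⟨ω2, by rwa [Function.update_of_ne hne]⟩
  · push_neg at hc1 hc2
    exact ⟨c, fun ω => ⟨hcb ω, hca ω⟩, Or.inl fun ω => le_antisymm (hc2 ω) (hc1 ω)⟩

lemma ftap_RS0 (Sb0 Sa0 Rd1 Rc1 x : ℝ) (hSb0 : 0 < Sb0) (hba0 : Sb0 ≤ Sa0)
    (hRd1 : 0 < Rd1) (hdc1 : Rd1 ≤ Rc1) (h1 : Rd1 * Sb0 ≤ x) (h2 : x ≤ Rc1 * Sa0) :
    ∃ R S0 : ℝ, R ∈ Set.Icc Rd1 Rc1 ∧ S0 ∈ Set.Icc Sb0 Sa0 ∧ R * S0 = x := by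
  have hRc1 : 0 < Rc1 := lt_of_lt_of_le hRd1 hdc1
  by_cases h : x ≤ Rc1 * Sb0
  · refine ⟨x / Sb0, Sb0, ⟨?_, ?_⟩, ⟨le_rfl, hba0⟩, by field_simp⟩
    · rw [le_div_iff₀ hSb0]; linarith
    · rw [div_le_iff₀ hSb0]; linarith
  · push_neg at h
    refine ⟨Rc1, x / Rc1, ⟨hdc1, le_rfl⟩, ⟨?_, ?_⟩, by field_simp⟩
    · rw [le_div_iff₀ hRc1]; nlinarith
    · rw [div_le_iff₀ hRc1]; nlinarith

/-- Combine: a point x in [a,b] which is a positive-weighted average of some S1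
between the bounds gives the martingale data. -/
lemma ftap_assemble {Ω : Type*} [Fintype Ω] [Nonempty Ω]
    (Sb0 Sa0 Rd1 Rc1 : ℝ) (Sb1 Sa1 : Ω → ℝ)
    (hSb0 : 0 < Sb0) (hba0 : Sb0 ≤ Sa0) (hRd1 : 0 < Rd1) (hdc1 : Rd1 ≤ Rc1)
    (hba1 : ∀ ω, Sb1 ω ≤ Sa1 ω) (x : ℝ)
    (hax : Rd1 * Sb0 ≤ x) (hxb : x ≤ Rc1 * Sa0)
    (S1 : Ω → ℝ) (hS1 : ∀ ω, Sb1 ω ≤ S1 ω ∧ S1 ω ≤ Sa1 ω)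
    (hbal : (∀ ω, S1 ω = x) ∨ ((∃ ω, S1 ω < x) ∧ (∃ ω, x < S1 ω))) :
    (∃ (R S0 : ℝ) (p S1 : Ω → ℝ),
      R ∈ Set.Icc Rd1 Rc1 ∧ S0 ∈ Set.Icc Sb0 Sa0 ∧
      (∀ ω, 0 < p ω) ∧ (∑ ω, p ω) = 1 ∧
      (∀ ω, Sb1 ω ≤ S1 ω ∧ S1 ω ≤ Sa1 ω) ∧
      (∑ ω, p ω * S1 ω) = R * S0) := by
  obtain ⟨p, hp, hp1, hpx⟩ := ftap_bal S1 x hbal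
  obtain ⟨R, S0, hR, hS0, hRS0⟩ := ftap_RS0 Sb0 Sa0 Rd1 Rc1 x hSb0 hba0 hRd1 hdc1 hax hxb
  exact ⟨R, S0, p, S1, hR, hS0, hp, hp1, hS1, by rw [hpx, hRS0]⟩

/-- One-period fundamental theorem with bid-ask spreads and two interest rates:
no arbitrage iff there exist `R ∈ [R^d_1, R^c_1]`, `S_0 ∈ [S^b_0, S^a_0]`, a strictly
positive probability vector `p` and `S_1` with `S^b_1 ≤ S_1 ≤ S^a_1` such that
`∑ ω, p ω * S_1 ω = R * S_0`. -/
theorem one_period_ftap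
    {Ω : Type*} [Fintype Ω] [Nonempty Ω]
    (Sb0 Sa0 Rd1 Rc1 : ℝ) (Sb1 Sa1 : Ω → ℝ)
    (hSb0 : 0 < Sb0) (hba0 : Sb0 ≤ Sa0)
    (hRd1 : 0 < Rd1) (hdc1 : Rd1 ≤ Rc1)
    (hSb1 : ∀ ω, 0 < Sb1 ω) (hba1 : ∀ ω, Sb1 ω ≤ Sa1 ω) :
    (¬ ∃ α1 β1 : ℝ,
      α1 + max β1 0 * Sa0 - max (-β1) 0 * Sb0 ≤ 0 ∧
      (∀ ω, 0 ≤ (max α1 0 * Rd1 - max (-α1) 0 * Rc1)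
        + max β1 0 * Sb1 ω - max (-β1) 0 * Sa1 ω) ∧
      (∃ ω, 0 < (max α1 0 * Rd1 - max (-α1) 0 * Rc1)
        + max β1 0 * Sb1 ω - max (-β1) 0 * Sa1 ω)) ↔
    (∃ (R S0 : ℝ) (p S1 : Ω → ℝ),
      R ∈ Set.Icc Rd1 Rc1 ∧ S0 ∈ Set.Icc Sb0 Sa0 ∧
      (∀ ω, 0 < p ω) ∧ (∑ ω, p ω) = 1 ∧
      (∀ ω, Sb1 ω ≤ S1 ω ∧ S1 ω ≤ Sa1 ω) ∧
      (∑ ω, p ω * S1 ω) = R * S0) := by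
  classical
  have hRc1 : 0 < Rc1 := lt_of_lt_of_le hRd1 hdc1
  have hSa0 : 0 < Sa0 := lt_of_lt_of_le hSb0 hba0
  set a : ℝ := Rd1 * Sb0 with ha
  set b : ℝ := Rc1 * Sa0 with hb
  have hab : a ≤ b := by nlinarith
  constructor
  · -- no arbitrage → exists martingale data
    intro hNA
    by_cases h1 : ∃ ω, Sb1 ω < b
    · by_cases h2 : ∃ ω, a < Sa1 ω
      · -- core case
        obtain ⟨ωm, _, hωm⟩ := Finset.exists_min_image Finset.univ Sb1 Finset.univ_nonempty
        obtain ⟨ωM, _, hωM⟩ := Finset.exists_max_image Finset.univ Sa1 Finset.univ_nonempty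
        set m1 : ℝ := Sb1 ωm with hm1
        set M2 : ℝ := Sa1 ωM with hM2
        have hm1b : m1 < b := by
          obtain ⟨ω1, hω1⟩ := h1
          exact lt_of_le_of_lt (hωm ω1 (Finset.mem_univ _)) hω1
        have haM2 : a < M2 := by
          obtain ⟨ω2, hω2⟩ := h2
          exact lt_of_lt_of_le hω2 (hωM ω2 (Finset.mem_univ _))
        have hm1M2 : m1 ≤ M2 := le_trans (hba1 ωm) (hωM ωm (Finset.mem_univ _))
        by_cases hmM : m1 < M2
        · set L : ℝ := max a m1 with hL
          set U : ℝ := min b M2 with hU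
          have hLU : L ≤ U := max_le (le_min hab haM2.le) (le_min hm1b.le hmM.le)
          set x : ℝ := (L + U) / 2 with hx
          have hax : a ≤ x := by
            have : a ≤ L := le_max_left _ _
            have : L ≤ x := by rw [hx]; linarith
            linarith [le_max_left a m1]
          have hxb : x ≤ b := by
            have h3 : U ≤ b := min_le_left _ _
            have h4 : x ≤ U := by rw [hx]; linarith
            linarith
          have hm1x : m1 < x := by
            have h3 : m1 ≤ L := le_max_right _ _
            have h4 : m1 < U := lt_min hm1b hmM
            rw [hx]; linarith
          have hxM2 : x < M2 := by
            have h3 : L < M2 := max_lt haM2 hmM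
            have h4 : U ≤ M2 := min_le_right _ _
            rw [hx]; linarith
          obtain ⟨S1, hS1, hbal⟩ := ftap_S1 Sb1 Sa1 hba1 x ⟨ωm, hm1x⟩ ⟨ωM, hxM2⟩
          exact ftap_assemble Sb0 Sa0 Rd1 Rc1 Sb1 Sa1 hSb0 hba0 hRd1 hdc1 hba1 x hax hxb
            S1 hS1 hbal
        · -- m1 = M2 : everything constant
          have heq : m1 = M2 := le_antisymm hm1M2 (not_lt.mp hmM)
          have hSa1c : ∀ ω, Sa1 ω = m1 := by
            intro ω
            have l1 : Sa1 ω ≤ M2 := hωM ω (Finset.mem_univ _)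
            have l2 : m1 ≤ Sb1 ω := hωm ω (Finset.mem_univ _)
            have l3 := hba1 ω
            linarith [heq ▸ l1]
          exact ftap_assemble Sb0 Sa0 Rd1 Rc1 Sb1 Sa1 hSb0 hba0 hRd1 hdc1 hba1 m1
            (le_of_le_of_eq haM2.le heq.symm) hm1b.le Sa1 (fun ω => ⟨hba1 ω, le_rfl⟩)
            (Or.inl hSa1c)
      · -- all Sa1 ≤ a; rule out strict by arbitrage, then Sa1 ≡ a
        push_neg at h2
        have hSa1c : ∀ ω, Sa1 ω = a := by
          intro ω
          refine le_antisymm (h2 ω) ?_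
          by_contra hlt
          push_neg at hlt
          refine hNA ⟨Sb0, -1, ?_, ?_, ⟨ω, ?_⟩⟩
          · simp [hSb0.le]
          · intro ω'
            have := h2 ω'
            simp only [neg_neg, max_eq_right (by norm_num : (-1:ℝ) ≤ 0),
              max_eq_left (by norm_num : (0:ℝ) ≤ 1),
              max_eq_left hSb0.le, max_eq_right (by linarith : -Sb0 ≤ 0)]
            simp only [ha] at this ⊢
            nlinarith
          · simp only [neg_neg, max_eq_right (by norm_num : (-1:ℝ) ≤ 0),
              max_eq_left (by norm_num : (0:ℝ) ≤ 1),
              max_eq_left hSb0.le, max_eq_right (by linarith : -Sb0 ≤ 0)]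
            simp only [ha] at hlt ⊢
            nlinarith
        exact ftap_assemble Sb0 Sa0 Rd1 Rc1 Sb1 Sa1 hSb0 hba0 hRd1 hdc1 hba1 a
          le_rfl hab Sa1 (fun ω => ⟨hba1 ω, le_rfl⟩) (Or.inl hSa1c)
    · -- all Sb1 ≥ b; rule out strict by arbitrage, then Sb1 ≡ b
      push_neg at h1
      have hSb1c : ∀ ω, Sb1 ω = b := by
        intro ω
        refine le_antisymm ?_ (h1 ω)
        by_contra hlt
        push_neg at hlt
        refine hNA ⟨-Sa0, 1, ?_, ?_, ⟨ω, ?_⟩⟩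
        · simp
        · intro ω'
          have := h1 ω'
          simp only [max_eq_left (by norm_num : (0:ℝ) ≤ 1),
            max_eq_right (by norm_num : (-1:ℝ) ≤ 0), neg_neg,
            max_eq_right (by linarith : -Sa0 ≤ 0), max_eq_left hSa0.le]
          simp only [hb] at this ⊢
          nlinarith
        · simp only [max_eq_left (by norm_num : (0:ℝ) ≤ 1),
            max_eq_right (by norm_num : (-1:ℝ) ≤ 0), neg_neg,
            max_eq_right (by linarith : -Sa0 ≤ 0), max_eq_left hSa0.le]
          simp only [hb] at hlt ⊢
          nlinarith
      exact ftap_assemble Sb0 Sa0 Rd1 Rc1 Sb1 Sa1 hSb0 hba0 hRd1 hdc1 hba1 b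
        hab le_rfl Sb1 (fun ω => ⟨le_rfl, hba1 ω⟩) (Or.inl hSb1c)
  · -- martingale data → no arbitrage
    rintro ⟨R, S0, p, S1, ⟨hR1, hR2⟩, ⟨hS01, hS02⟩, hp, hp1, hS1b, hsum⟩
    rintro ⟨α1, β1, hcost, hge, ω0, hpos⟩
    have hR0 : 0 < R := lt_of_lt_of_le hRd1 hR1
    set q : ℝ := max β1 0 with hq
    set r : ℝ := max (-β1) 0 with hr
    set cc : ℝ := max α1 0 * Rd1 - max (-α1) 0 * Rc1 with hcc
    have hq0 : 0 ≤ q := le_max_right _ _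
    have hr0 : 0 ≤ r := le_max_right _ _
    have hqr : q - r = β1 := by
      rcases le_total β1 0 with h | h
      · rw [hq, hr, max_eq_right h, max_eq_left (by linarith)]; ring
      · rw [hq, hr, max_eq_left h, max_eq_right (by linarith)]; ring
    have key1 : ∑ ω, p ω * Sb1 ω ≤ R * S0 := by
      rw [← hsum]
      exact Finset.sum_le_sum fun ω _ =>
        mul_le_mul_of_nonneg_left (hS1b ω).1 (hp ω).le
    have key2 : R * S0 ≤ ∑ ω, p ω * Sa1 ω := by
      rw [← hsum]
      exact Finset.sum_le_sum fun ω _ =>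
        mul_le_mul_of_nonneg_left (hS1b ω).2 (hp ω).le
    have hsum_pos : 0 < ∑ ω, p ω * (cc + q * Sb1 ω - r * Sa1 ω) := by
      apply Finset.sum_pos' (fun ω _ => mul_nonneg (hp ω).le (hge ω))
      exact ⟨ω0, Finset.mem_univ _, mul_pos (hp ω0) hpos⟩
    have hexpand : ∑ ω, p ω * (cc + q * Sb1 ω - r * Sa1 ω)
        = cc + q * (∑ ω, p ω * Sb1 ω) - r * (∑ ω, p ω * Sa1 ω) := by
      have e1 : ∀ ω : Ω, p ω * (cc + q * Sb1 ω - r * Sa1 ω)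
          = cc * p ω + q * (p ω * Sb1 ω) - r * (p ω * Sa1 ω) := fun ω => by ring
      rw [Finset.sum_congr rfl fun ω _ => e1 ω, Finset.sum_sub_distrib,
        Finset.sum_add_distrib, ← Finset.mul_sum, ← Finset.mul_sum, ← Finset.mul_sum,
        hp1, mul_one]
    have hcα : cc ≤ α1 * R := by
      rcases le_total 0 α1 with h | h
      · rw [hcc, max_eq_left h, max_eq_right (by linarith)]
        nlinarith
      · rw [hcc, max_eq_right h, max_eq_left (by linarith)]
        nlinarith
    have step1 : 0 < cc + q * (R * S0) - r * (R * S0) := by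
      have l1 : q * (∑ ω, p ω * Sb1 ω) ≤ q * (R * S0) :=
        mul_le_mul_of_nonneg_left key1 hq0
      have l2 : r * (R * S0) ≤ r * (∑ ω, p ω * Sa1 ω) :=
        mul_le_mul_of_nonneg_left key2 hr0
      rw [hexpand] at hsum_pos
      linarith
    have step2 : 0 < R * (α1 + β1 * S0) := by
      have e2 : cc + q * (R * S0) - r * (R * S0) = cc + (q - r) * (R * S0) := by ring
      rw [e2, hqr] at step1
      have e3 : R * (α1 + β1 * S0) = α1 * R + β1 * (R * S0) := by ring
      rw [e3]
      linarith
    have step3 : 0 < α1 + β1 * S0 := by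
      by_contra hle
      push_neg at hle
      have := mul_nonpos_of_nonneg_of_nonpos hR0.le hle
      linarith
    have step4 : β1 * S0 ≤ q * Sa0 - r * Sb0 := by
      have l1 : 0 ≤ q * (Sa0 - S0) := mul_nonneg hq0 (by linarith)
      have l2 : 0 ≤ r * (S0 - Sb0) := mul_nonneg hr0 (by linarith)
      rw [← hqr]
      nlinarith
    linarith
end

section
/- Every generalised trading strategy (α,β,γ,δ) (a strategy with explicit consumption: ϱ_t(α_t) ≥ γ_t, β_t ≥ δ_t, and ϑ_t(γ_t − α_{t+1}, δ_t − β_{t+1}) ≥ 0 for all t) is dominated by a self-financing strategy (ε,η) ∈ Φ with ε_0 = α_0, η = β, and ε_t ≥ α_t for all t ∈ {0,...,T+1}, constructed by ε_{t+1} = ϑ_t(ϱ_t(ε_t), η_{t+1} − η_t). -/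
open MeasureTheory

private lemma rho_mono {x y r c : ℝ} (hxy : x ≤ y) (hr : 0 < r) (hrc : r ≤ c) :
    max x 0 * r - max (-x) 0 * c ≤ max y 0 * r - max (-y) 0 * c := by
  rcases le_total x 0 with hx | hx <;> rcases le_total y 0 with hy | hy <;>
    simp [max_eq_left, max_eq_right, hx, hy, neg_nonneg.mpr, neg_nonpos.mpr] <;>
    nlinarith


/-- Every generalised trading strategy `(α, β, γ, δ)` is dominated by a self-financing
strategy `(ε, η)` with `ε_0 = α_0`, `η = β`, and `ε_t ≥ α_t` for all `t`, constructed
via `ε_{t+1} = ϑ_t(ϱ_t(ε_t), η_t − η_{t+1})`. -/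
theorem generalised_strategy_dominated
    {Ω : Type*} [Fintype Ω] {m0 : MeasurableSpace Ω}
    (ℱ : Filtration ℕ m0) (T : ℕ)
    (Sb Sa Rd Rc : ℕ → Ω → ℝ)
    (hSb : ∀ t ω, 0 < Sb t ω) (hba : ∀ t ω, Sb t ω ≤ Sa t ω)
    (hRd : ∀ t ω, 0 < Rd t ω) (hdc : ∀ t ω, Rd t ω ≤ Rc t ω)
    (α β γ δ : ℕ → Ω → ℝ)
    (hβ0 : β 0 = 0)
    (hpred : ∀ t ≤ T, StronglyMeasurable[ℱ t] (α (t + 1)) ∧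
      StronglyMeasurable[ℱ t] (β (t + 1)))
    (hadapt : ∀ t ≤ T, StronglyMeasurable[ℱ t] (γ t) ∧ StronglyMeasurable[ℱ t] (δ t))
    -- consumption constraints: ϱ_t(α_t) ≥ γ_t and β_t ≥ δ_t
    (hγ : ∀ t ≤ T, ∀ ω, γ t ω ≤ max (α t ω) 0 * Rd t ω - max (-(α t ω)) 0 * Rc t ω)
    (hδ : ∀ t ≤ T, ∀ ω, δ t ω ≤ β t ω)
    -- ϑ_t(γ_t − α_{t+1}, δ_t − β_{t+1}) ≥ 0
    (hϑ : ∀ t ≤ T, ∀ ω,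
      0 ≤ (γ t ω - α (t + 1) ω) + max (δ t ω - β (t + 1) ω) 0 * Sb t ω
        - max (-(δ t ω - β (t + 1) ω)) 0 * Sa t ω) :
    ∃ ε : ℕ → Ω → ℝ,
      ε 0 = α 0 ∧
      -- construction: ε_{t+1} = ϑ_t(ϱ_t(ε_t), β_t − β_{t+1})
      (∀ t ≤ T, ∀ ω, ε (t + 1) ω =
        (max (ε t ω) 0 * Rd t ω - max (-(ε t ω)) 0 * Rc t ω)
          + max (β t ω - β (t + 1) ω) 0 * Sb t ω
          - max (-(β t ω - β (t + 1) ω)) 0 * Sa t ω) ∧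
      -- (ε, β) is self-financing
      (∀ t ≤ T, ∀ ω,
        0 ≤ (max (ε t ω) 0 * Rd t ω - max (-(ε t ω)) 0 * Rc t ω - ε (t + 1) ω)
          + max (β t ω - β (t + 1) ω) 0 * Sb t ω
          - max (-(β t ω - β (t + 1) ω)) 0 * Sa t ω) ∧
      -- domination
      (∀ t ≤ T + 1, ∀ ω, α t ω ≤ ε t ω) := by
  classical
  set f : ℕ → (Ω → ℝ) → Ω → ℝ := fun t e ω =>
    (max (e ω) 0 * Rd t ω - max (-(e ω)) 0 * Rc t ω)
      + max (β t ω - β (t + 1) ω) 0 * Sb t ω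
      - max (-(β t ω - β (t + 1) ω)) 0 * Sa t ω with hf
  let ε : ℕ → Ω → ℝ := fun t => Nat.rec (α 0) (fun t e => f t e) t
  have hrec : ∀ t, ε (t + 1) = f t (ε t) := fun t => rfl
  have hdom : ∀ t ≤ T + 1, ∀ ω, α t ω ≤ ε t ω := by
    intro t ht ω
    induction t generalizing ω with
    | zero => exact le_of_eq rfl
    | succ t ih =>
      have htT : t ≤ T := Nat.lt_succ_iff.mp ht
      have ihω : ∀ ω, α t ω ≤ ε t ω := fun ω => ih (le_of_lt ht) ω
      have h1 : γ t ω ≤ max (ε t ω) 0 * Rd t ω - max (-(ε t ω)) 0 * Rc t ω :=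
        (hγ t htT ω).trans (rho_mono (ihω ω) (hRd t ω) (hdc t ω))
      have h2 : max (δ t ω - β (t + 1) ω) 0 * Sb t ω
            - max (-(δ t ω - β (t + 1) ω)) 0 * Sa t ω
          ≤ max (β t ω - β (t + 1) ω) 0 * Sb t ω
            - max (-(β t ω - β (t + 1) ω)) 0 * Sa t ω :=
        rho_mono (by linarith [hδ t htT ω]) (hSb t ω) (hba t ω)
      have h3 := hϑ t htT ω
      have : ε (t + 1) ω = f t (ε t) ω := by rw [hrec]
      rw [this, hf]
      dsimp only
      linarith
  refine ⟨ε, rfl, fun t _ ω => by rw [hrec], fun t ht ω => ?_, hdom⟩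
  rw [hrec, hf]
  dsimp only
  linarith
end
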